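/- arXiv:1503.08338 — 3 statements merged into one kernel-verified Lean document; each statement's English description precedes it below -/
import Mathlib

section
/- Let T be the theory of dense linear orders without endpoints and let κ be a singular cardinal with κ ≥ |T|. Then every κ-saturated model of T is κ⁺-saturated. Consequently T has no exactly-κ-saturated model for singular κ. -/
open FirstOrder Language Cardinal

namespace Paper

lemma exists_between_finsets {M : Type} [LinearOrder M] [DenselyOrdered M]
    [NoBotOrder M] [NoTopOrder M] [Nonempty M] (A B : Finset M)
    (h : ∀ a ∈ A, ∀ b ∈ B, a < b) :
    ∃ x, (∀ a ∈ A, a < x) ∧ (∀ b ∈ B, x < b) := by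
  rcases A.eq_empty_or_nonempty with hA | hA
  · rcases B.eq_empty_or_nonempty with hB | hB
    · exact ⟨Classical.arbitrary M, by simp [hA], by simp [hB]⟩
    · obtain ⟨x, hx⟩ := exists_not_ge (B.min' hB)
      exact ⟨x, by simp [hA], fun b hb => lt_of_lt_of_le (not_le.1 hx) (B.min'_le b hb)⟩
  · rcases B.eq_empty_or_nonempty with hB | hB
    · obtain ⟨x, hx⟩ := exists_not_le (A.max' hA)
      exact ⟨x, fun a ha => lt_of_le_of_lt (A.le_max' a ha) (not_le.1 hx), by simp [hB]⟩
    · obtain ⟨x, hx1, hx2⟩ := exists_between (h _ (A.max'_mem hA) _ (B.min'_mem hB))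
      exact ⟨x, fun a ha => lt_of_le_of_lt (A.le_max' a ha) hx1,
        fun b hb => lt_of_lt_of_le hx2 (B.min'_le b hb)⟩

lemma exists_samePos_extend {M : Type} [LinearOrder M] [DenselyOrdered M]
    [NoBotOrder M] [NoTopOrder M] {δ : Type} [Finite δ] (w w' : δ → M)
    (h : ∀ i j, w i ≤ w j ↔ w' i ≤ w' j) (b : M) :
    ∃ b', ∀ d, (w d ≤ b ↔ w' d ≤ b') ∧ (b ≤ w d ↔ b' ≤ w' d) := by
  classical
  haveI : Nonempty M := ⟨b⟩
  have hlt : ∀ i j, w i < w j ↔ w' i < w' j := by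
    intro i j
    simp only [lt_iff_le_not_ge, h i j, h j i]
  by_cases he : ∃ d, w d = b
  · obtain ⟨d0, hd0⟩ := he
    refine ⟨w' d0, fun d => ?_⟩
    constructor
    · rw [← hd0]; exact h d d0
    · rw [← hd0]; exact h d0 d
  · haveI : Fintype δ := Fintype.ofFinite δ
    obtain ⟨x, hx1, hx2⟩ := exists_between_finsets
      ((Finset.univ.filter (fun d => w d < b)).image w')
      ((Finset.univ.filter (fun d => b < w d)).image w')
      (by
        simp only [Finset.mem_image, Finset.mem_filter, Finset.mem_univ, true_and]
        rintro _ ⟨i, hi, rfl⟩ _ ⟨j, hj, rfl⟩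
        exact (hlt i j).1 (hi.trans hj))
    refine ⟨x, fun d => ?_⟩
    rcases lt_trichotomy (w d) b with hd | hd | hd
    · have : w' d < x := hx1 _ (Finset.mem_image_of_mem w'
        (Finset.mem_filter.2 ⟨Finset.mem_univ d, hd⟩))
      exact ⟨iff_of_true hd.le this.le,
        iff_of_false (not_le.2 hd) (not_le.2 this)⟩
    · exact absurd ⟨d, hd⟩ he
    · have : x < w' d := hx2 _ (Finset.mem_image_of_mem w'
        (Finset.mem_filter.2 ⟨Finset.mem_univ d, hd⟩))
      exact ⟨iff_of_false (not_le.2 hd) (not_le.2 this),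
        iff_of_true hd.le this.le⟩

section QE

variable {M : Type} [Language.order.Structure M] [LinearOrder M]
  [Language.order.OrderedStructure M] [DenselyOrdered M] [NoBotOrder M] [NoTopOrder M]

set_option linter.unusedSectionVars false in
lemma key_aux {β : Type} {n : ℕ} (v v' : β → M) (xs xs' : Fin n → M) (F : Finset β)
    (h1 : ∀ a ∈ F, ∀ a' ∈ F, (v a ≤ v a' ↔ v' a ≤ v' a'))
    (h2 : ∀ a ∈ F, ∀ k, (v a ≤ xs k ↔ v' a ≤ xs' k) ∧ (xs k ≤ v a ↔ xs' k ≤ v' a))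
    (h3 : ∀ k k', (xs k ≤ xs k' ↔ xs' k ≤ xs' k')) :
    ∀ z : β ⊕ Fin n, (∀ a, z = Sum.inl a → a ∈ F) →
    ∀ z' : β ⊕ Fin n, (∀ a, z' = Sum.inl a → a ∈ F) →
    (Sum.elim v xs z ≤ Sum.elim v xs z' ↔ Sum.elim v' xs' z ≤ Sum.elim v' xs' z') := by
  rintro (a | k) hz (a' | k') hz'
  · exact h1 a (hz a rfl) a' (hz' a' rfl)
  · exact (h2 a (hz a rfl) k').1
  · exact (h2 a' (hz' a' rfl) k).2
  · exact h3 k k'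

lemma realize_iff_of_samePos {β : Type} [DecidableEq β] :
    ∀ {n : ℕ} (φ : Language.order.BoundedFormula β n)
    (v v' : β → M) (xs xs' : Fin n → M),
    (∀ a ∈ φ.freeVarFinset, ∀ a' ∈ φ.freeVarFinset, (v a ≤ v a' ↔ v' a ≤ v' a')) →
    (∀ a ∈ φ.freeVarFinset, ∀ k, (v a ≤ xs k ↔ v' a ≤ xs' k) ∧ (xs k ≤ v a ↔ xs' k ≤ v' a)) →
    (∀ k k', (xs k ≤ xs k' ↔ xs' k ≤ xs' k')) →
    (φ.Realize v xs ↔ φ.Realize v' xs') := by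
  intro n φ
  induction φ with
  | falsum => exact fun _ _ _ _ _ _ _ => Iff.rfl
  | @equal n t₁ t₂ =>
    intro v v' xs xs' h1 h2 h3
    have key := key_aux v v' xs xs' (BoundedFormula.equal t₁ t₂).freeVarFinset h1 h2 h3
    cases t₁ with
    | var z₁ =>
      cases t₂ with
      | var z₂ =>
        show Sum.elim v xs z₁ = Sum.elim v xs z₂ ↔ Sum.elim v' xs' z₁ = Sum.elim v' xs' z₂
        rw [le_antisymm_iff, le_antisymm_iff]
        refine and_congr (key z₁ ?_ z₂ ?_) (key z₂ ?_ z₁ ?_) <;>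
          (rintro a h; subst h; simp [BoundedFormula.freeVarFinset, Term.varFinsetLeft])
      | func f _ => exact isEmptyElim f
    | func f _ => exact isEmptyElim f
  | @rel n l R ts =>
    intro v v' xs xs' h1 h2 h3
    have key := key_aux v v' xs xs' (BoundedFormula.rel R ts).freeVarFinset h1 h2 h3
    cases R with
    | le =>
      obtain ⟨z₀, hz₀⟩ : ∃ z, ts 0 = Term.var z := by
        cases hh : ts 0 with
        | var z => exact ⟨z, rfl⟩
        | func f _ => exact isEmptyElim f
      obtain ⟨z₁, hz₁⟩ : ∃ z, ts 1 = Term.var z := by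
        cases hh : ts 1 with
        | var z => exact ⟨z, rfl⟩
        | func f _ => exact isEmptyElim f
      show (Structure.RelMap (leSymb : Language.order.Relations 2)
          fun i => (ts i).realize (Sum.elim v xs)) ↔ (Structure.RelMap
          (leSymb : Language.order.Relations 2) fun i => (ts i).realize (Sum.elim v' xs'))
      rw [relMap_leSymb, relMap_leSymb]
      simp only [hz₀, hz₁, Term.realize_var]
      refine key z₀ ?_ z₁ ?_
      · rintro a h; subst h
        refine Finset.mem_biUnion.2 ⟨0, Finset.mem_univ _, ?_⟩
        rw [hz₀]; simp [Term.varFinsetLeft]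
      · rintro a h; subst h
        refine Finset.mem_biUnion.2 ⟨1, Finset.mem_univ _, ?_⟩
        rw [hz₁]; simp [Term.varFinsetLeft]
  | @imp n φ₁ φ₂ ih₁ ih₂ =>
    intro v v' xs xs' h1 h2 h3
    have e : (φ₁.imp φ₂).freeVarFinset = φ₁.freeVarFinset ∪ φ₂.freeVarFinset := rfl
    refine imp_congr (ih₁ v v' xs xs' ?_ ?_ h3) (ih₂ v v' xs xs' ?_ ?_ h3)
    · exact fun a ha a' ha' => h1 a (e ▸ Finset.mem_union_left _ ha)
        a' (e ▸ Finset.mem_union_left _ ha')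
    · exact fun a ha k => h2 a (e ▸ Finset.mem_union_left _ ha) k
    · exact fun a ha a' ha' => h1 a (e ▸ Finset.mem_union_right _ ha)
        a' (e ▸ Finset.mem_union_right _ ha')
    · exact fun a ha k => h2 a (e ▸ Finset.mem_union_right _ ha) k
  | @all n φ ih =>
    intro v v' xs xs' h1 h2 h3
    have main : ∀ (v v' : β → M) (xs xs' : Fin n → M),
        (∀ a ∈ φ.freeVarFinset, ∀ a' ∈ φ.freeVarFinset, (v a ≤ v a' ↔ v' a ≤ v' a')) →
        (∀ a ∈ φ.freeVarFinset, ∀ k, (v a ≤ xs k ↔ v' a ≤ xs' k) ∧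
          (xs k ≤ v a ↔ xs' k ≤ v' a)) →
        (∀ k k', (xs k ≤ xs k' ↔ xs' k ≤ xs' k')) →
        (∀ b, φ.Realize v (Fin.snoc xs b)) → ∀ b', φ.Realize v' (Fin.snoc xs' b') := by
      intro v v' xs xs' h1 h2 h3 H b'
      obtain ⟨b, hb⟩ := exists_samePos_extend
        (δ := {x // x ∈ φ.freeVarFinset} ⊕ Fin n)
        (Sum.elim (fun s => v' s.1) xs') (Sum.elim (fun s => v s.1) xs)
        (by
          rintro (s | k) (s' | k')
          · exact (h1 s.1 s.2 s'.1 s'.2).symm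
          · exact ((h2 s.1 s.2 k').1).symm
          · exact ((h2 s'.1 s'.2 k).2).symm
          · exact (h3 k k').symm) b'
      refine (ih v v' (Fin.snoc xs b) (Fin.snoc xs' b') h1 ?_ ?_).1 (H b)
      · intro a ha k
        refine Fin.lastCases ?_ ?_ k
        · simp only [Fin.snoc_last]
          exact ⟨((hb (Sum.inl ⟨a, ha⟩)).1).symm, ((hb (Sum.inl ⟨a, ha⟩)).2).symm⟩
        · intro k₀
          simp only [Fin.snoc_castSucc]
          exact h2 a ha k₀
      · intro k k'
        refine Fin.lastCases ?_ ?_ k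
        · refine Fin.lastCases ?_ ?_ k'
          · simp only [Fin.snoc_last]
            exact iff_of_true le_rfl le_rfl
          · intro k₀
            simp only [Fin.snoc_last, Fin.snoc_castSucc]
            exact ((hb (Sum.inr k₀)).2).symm
        · intro k₀
          refine Fin.lastCases ?_ ?_ k'
          · simp only [Fin.snoc_last, Fin.snoc_castSucc]
            exact ((hb (Sum.inr k₀)).1).symm
          · intro k₁
            simp only [Fin.snoc_castSucc]
            exact h3 k₀ k₁
    simp only [BoundedFormula.realize_all]
    constructor
    · exact main v v' xs xs' (fun a ha a' ha' => h1 a ha a' ha')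
        (fun a ha k => h2 a ha k) h3
    · exact main v' v xs' xs (fun a ha a' ha' => (h1 a ha a' ha').symm)
        (fun a ha k => ⟨(h2 a ha k).1.symm, (h2 a ha k).2.symm⟩)
        (fun k k' => (h3 k k').symm)

lemma formula_realize_iff_of_samePos {β : Type} [DecidableEq β]
    (φ : Language.order.Formula β) (u u' : β → M)
    (h : ∀ a ∈ φ.freeVarFinset, ∀ a' ∈ φ.freeVarFinset, (u a ≤ u a' ↔ u' a ≤ u' a')) :
    φ.Realize u ↔ φ.Realize u' :=
  realize_iff_of_samePos φ u u' default default h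
    (fun _ _ k => k.elim0) (fun k => k.elim0)

end QE



lemma exists_small_dominating {κ : Cardinal.{0}} (hκ : ℵ₀ ≤ κ) (hsing : ¬ κ.IsRegular)
    {β : Type} (r : β → β → Prop) (htot : ∀ a b, r a b ∨ r b a)
    (S : Set β) (hS : #S ≤ κ) :
    ∃ T : Set β, T ⊆ S ∧ #T < κ ∧ ∀ s ∈ S, ∃ t ∈ T, r s t := by
  classical
  have hcof : κ.ord.cof < κ := by
    rcases (Ordinal.cof_ord_le κ).lt_or_eq with h | h
    · exact h
    · exact absurd ⟨hκ, h.ge⟩ hsing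
  haveI : IsWellOrder κ.ord.ToType (· < ·) := isWellOrder_lt
  obtain ⟨C, hCub, hCcard⟩ :=
    Order.exists_cof_eq κ.ord.ToType
  rw [Ordinal.cof_toType] at hCcard
  have hg : #S ≤ #(κ.ord.ToType) := by rwa [Cardinal.mk_toType, Cardinal.card_ord]
  obtain ⟨g⟩ := (Cardinal.le_def _ _).1 hg
  by_cases hex : ∃ c, c ∈ C ∧ ∀ s : S, ∃ t : S, g t ≤ c ∧ r s t
  · obtain ⟨c, _, hc⟩ := hex
    refine ⟨Subtype.val '' {t : S | g t ≤ c}, ?_, ?_, ?_⟩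
    · rintro x ⟨t, _, rfl⟩; exact t.2
    · have hIio : #(Set.Iio c) < κ := Cardinal.mk_Iio_ord_toType c
      have hIic : #(Set.Iic c) < κ := by
        have h2 : Set.Iic c = insert c (Set.Iio c) := by
          ext y; simp [le_iff_lt_or_eq, or_comm]
        rw [h2]
        calc #(insert c (Set.Iio c) : Set _) ≤ #(Set.Iio c) + 1 := Cardinal.mk_insert_le
          _ < κ := Cardinal.add_lt_of_lt hκ hIio (lt_of_lt_of_le Cardinal.one_lt_aleph0 hκ)
      calc #(Subtype.val '' {t : S | g t ≤ c}) ≤ #{t : S | g t ≤ c} := Cardinal.mk_image_le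
        _ ≤ #(Set.Iic c) := Cardinal.mk_le_of_injective (f := fun t => ⟨g t.1, t.2⟩)
            (fun a b hab => Subtype.ext (g.injective (congrArg Subtype.val hab)))
        _ < κ := hIic
    · rintro s hs
      obtain ⟨t, ht, hrt⟩ := hc ⟨s, hs⟩
      exact ⟨t.1, ⟨t, ht, rfl⟩, hrt⟩
  · push_neg at hex
    choose f hf using hex
    refine ⟨Set.range (fun c : C => (f c.1 c.2 : β)), ?_, ?_, ?_⟩
    · rintro x ⟨c, rfl⟩
      exact (f c.1 c.2).2
    · calc #(Set.range (fun c : C => (f c.1 c.2 : β))) ≤ #C := Cardinal.mk_range_le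
        _ < κ := by rw [hCcard]; exact hcof
    · intro s hs
      obtain ⟨c, hcC, hcub⟩ := hCub (g ⟨s, hs⟩)
      refine ⟨f c hcC, ⟨⟨c, hcC⟩, rfl⟩, ?_⟩
      have := hf c hcC ⟨s, hs⟩ hcub
      exact (htot s (f c hcC)).resolve_right this



/-- `M` is `κ`-saturated: every set of formulas in one free variable with fewer than `κ`
parameters which is finitely satisfiable in `M` is realized in `M`. -/
def IsSaturated (L : FirstOrder.Language) (M : Type) [L.Structure M] (lam : Cardinal) : Prop :=
  ∀ (α : Type) (v : α → M), #α < lam →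
    ∀ p : Set (L.Formula (α ⊕ Fin 1)),
      (∀ s : Finset (L.Formula (α ⊕ Fin 1)), ↑s ⊆ p →
        ∃ x : M, ∀ φ ∈ s, φ.Realize (Sum.elim v fun _ => x)) →
      ∃ x : M, ∀ φ ∈ p, φ.Realize (Sum.elim v fun _ => x)

/-- For the theory of dense linear orders without endpoints and a
singular cardinal `κ ≥ ℵ₀ = |T|`, every `κ`-saturated model is `κ⁺`-saturated
(hence there is no exactly-`κ`-saturated model of DLO for singular `κ`). -/
theorem statement2 (κ : Cardinal) (hκ : Cardinal.aleph0 ≤ κ) (hsing : ¬ κ.IsRegular)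
    (M : Type) [Language.order.Structure M] (hM : M ⊨ Language.order.dlo)
    (hsat : IsSaturated Language.order M κ) :
    IsSaturated Language.order M (Order.succ κ) := by
  classical
  intro α v hα p hfin
  -- set up the order structure on M
  haveI hMdlo : M ⊨ Language.order.dlo := hM
  haveI : M ⊨ Language.order.linearOrderTheory := inferInstance
  haveI : DecidableRel (fun (a b : M) =>
      Structure.RelMap (leSymb : Language.order.Relations 2) ![a, b]) :=
    fun _ _ => Classical.dec _
  letI : LinearOrder M := Language.order.linearOrderOfModels M
  haveI : Language.order.OrderedStructure M := ⟨fun x => by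
    have h2 : ![x 0, x 1] = x := by
      funext i; fin_cases i <;> rfl
    show Structure.RelMap leSymb x ↔ Structure.RelMap leSymb ![x 0, x 1]
    rw [h2]⟩
  haveI : DenselyOrdered M := Language.order.denselyOrdered_of_dlo M
  haveI : NoTopOrder M := Language.order.noTopOrder_of_dlo M
  haveI : NoBotOrder M := Language.order.noBotOrder_of_dlo M
  obtain ⟨x0, -⟩ := hfin ∅ (by simp)
  haveI : Nonempty M := ⟨x0⟩
  have hmkα : #α ≤ κ := by rwa [Order.lt_succ_iff] at hα
  -- witnesses for finite subsets of p
  let I := Finset (Language.order.Formula (α ⊕ Fin 1))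
  let w : I → M := fun t => if h : ↑t ⊆ p then (hfin t h).choose else x0
  have hw : ∀ (t : I) (h : ↑t ⊆ p), ∀ φ ∈ t, φ.Realize (Sum.elim v fun _ => w t) := by
    intro t h
    have hwt : w t = (hfin t h).choose := dif_pos h
    rw [hwt]
    exact (hfin t h).choose_spec
  -- an ultrafilter concentrating on large finite subsets of p
  let F : I → Set I := fun s => {t | ↑t ⊆ p ∧ s ⊆ t}
  let f : Filter I := ⨅ (s : {s : I // ↑s ⊆ p}), Filter.principal (F s.1)
  haveI hfne : Filter.NeBot f := by
    apply Filter.iInf_neBot_of_directed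
    · rintro ⟨s, hs⟩ ⟨t, ht⟩
      refine ⟨⟨s ∪ t, by rw [Finset.coe_union]; exact Set.union_subset hs ht⟩, ?_, ?_⟩
      · simp only [Filter.le_principal_iff, Filter.mem_principal]
        rintro u ⟨hu1, hu2⟩
        exact ⟨hu1, (Finset.union_subset_iff.1 hu2).1⟩
      · simp only [Filter.le_principal_iff, Filter.mem_principal]
        rintro u ⟨hu1, hu2⟩
        exact ⟨hu1, (Finset.union_subset_iff.1 hu2).2⟩
    · rintro ⟨s, hs⟩
      exact Filter.principal_neBot_iff.2 ⟨s, hs, subset_rfl⟩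
  let U : Ultrafilter I := Ultrafilter.of f
  have hU : ∀ s : I, ↑s ⊆ p → F s ∈ U := by
    intro s hs
    have h1 : F s ∈ f := Filter.mem_iInf_of_mem ⟨s, hs⟩ (Filter.mem_principal_self _)
    exact Ultrafilter.of_le f h1
  by_cases heq : ∃ a : α, {t : I | w t = v a} ∈ U
  · -- the type contains the formula x = v a; then v a realizes p
    obtain ⟨a, ha⟩ := heq
    refine ⟨v a, fun φ hφ => ?_⟩
    have h1 : F {φ} ∈ U := hU {φ} (by intro ψ hψ; rw [Finset.mem_coe, Finset.mem_singleton] at hψ; subst hψ; exact hφ)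
    obtain ⟨t, ⟨htp, hφt⟩, hwt⟩ := Filter.nonempty_of_mem (Filter.inter_mem h1 ha)
    have := hw t htp φ (hφt (Finset.mem_singleton_self φ))
    rwa [hwt] at this
  · push_neg at heq
    set Lo : Set α := {a | {t : I | v a < w t} ∈ U} with hLoDef
    have hHi : ∀ a ∉ Lo, {t : I | w t < v a} ∈ U := by
      intro a ha
      have h1 : {t : I | v a < w t}ᶜ ∈ U := Ultrafilter.compl_mem_iff_notMem.2 ha
      have h2 : {t : I | w t = v a}ᶜ ∈ U := Ultrafilter.compl_mem_iff_notMem.2 (heq a)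
      refine Filter.mem_of_superset (Filter.inter_mem h1 h2) ?_
      rintro t ⟨h1t, h2t⟩
      simp only [Set.mem_compl_iff, Set.mem_setOf_eq] at h1t h2t
      exact lt_of_le_of_ne (not_lt.1 h1t) h2t
    have K : ∀ (A : Finset α) (s : I), ↑s ⊆ p → ∃ y : M,
        (∀ φ ∈ s, φ.Realize (Sum.elim v fun _ => y)) ∧
        (∀ a ∈ A, a ∈ Lo → v a < y) ∧ (∀ a ∈ A, a ∉ Lo → y < v a) := by
      intro A s hs
      have hAU : (⋂ a ∈ A, {t : I | (a ∈ Lo → v a < w t) ∧ (a ∉ Lo → w t < v a)}) ∈ U := by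
        refine (Filter.biInter_finset_mem A).2 (fun a _ => ?_)
        by_cases haLo : a ∈ Lo
        · have haU : {t : I | v a < w t} ∈ U := haLo
          refine Filter.mem_of_superset haU ?_
          intro t ht
          exact ⟨fun _ => ht, fun h => absurd haLo h⟩
        · refine Filter.mem_of_superset (hHi a haLo) ?_
          intro t ht
          exact ⟨fun h => absurd h haLo, fun _ => ht⟩
      obtain ⟨t, ht1, ht2⟩ := Filter.nonempty_of_mem (Filter.inter_mem (hU s hs) hAU)
      refine ⟨w t, fun φ hφ => hw t ht1.1 φ (ht1.2 hφ), ?_, ?_⟩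
      · intro a haA haLo
        exact (Set.mem_iInter₂.1 ht2 a haA).1 haLo
      · intro a haA haLo
        exact (Set.mem_iInter₂.1 ht2 a haA).2 haLo
    -- small dominating sets for the cut
    have hSlo : #(v '' Lo) ≤ κ :=
      le_trans Cardinal.mk_image_le (le_trans (Cardinal.mk_subtype_le _) hmkα)
    have hShi : #(v '' Loᶜ) ≤ κ :=
      le_trans Cardinal.mk_image_le (le_trans (Cardinal.mk_subtype_le _) hmkα)
    obtain ⟨Tlo, hTloS, hTlocard, hTlodom⟩ := exists_small_dominating hκ hsing
      ((· ≤ ·) : M → M → Prop) le_total (v '' Lo) hSlo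
    obtain ⟨Thi, hThiS, hThicard, hThidom⟩ := exists_small_dominating hκ hsing
      (fun x y : M => y ≤ x) (fun a b => le_total b a) (v '' Loᶜ) hShi
    let γ := (↥Tlo) ⊕ (↥Thi)
    let u : γ → M := Sum.elim Subtype.val Subtype.val
    let xvar : Language.order.Term ((γ ⊕ Fin 1) ⊕ Fin 0) := Term.var (Sum.inl (Sum.inr 0))
    let flo : ↥Tlo → Language.order.Formula (γ ⊕ Fin 1) := fun t =>
      Term.lt (Term.var (Sum.inl (Sum.inl (Sum.inl t)))) xvar
    let fhi : ↥Thi → Language.order.Formula (γ ⊕ Fin 1) := fun t =>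
      Term.lt xvar (Term.var (Sum.inl (Sum.inl (Sum.inr t))))
    let q : Set (Language.order.Formula (γ ⊕ Fin 1)) := Set.range flo ∪ Set.range fhi
    have hflo : ∀ (t : ↥Tlo) (y : M),
        (flo t).Realize (Sum.elim u fun _ => y) ↔ ((t : M) < y) := by
      intro t y
      simp [flo, xvar, Formula.Realize, u]
    have hfhi : ∀ (t : ↥Thi) (y : M),
        (fhi t).Realize (Sum.elim u fun _ => y) ↔ (y < (t : M)) := by
      intro t y
      simp [fhi, xvar, Formula.Realize, u]
    have hγ : #γ < κ := by
      have h1 : #γ = #(↥Tlo) + #(↥Thi) := by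
        rw [Cardinal.mk_sum, Cardinal.lift_id, Cardinal.lift_id]
      rw [h1]
      exact Cardinal.add_lt_of_lt hκ hTlocard hThicard
    have qfin : ∀ s : Finset (Language.order.Formula (γ ⊕ Fin 1)), ↑s ⊆ q →
        ∃ y : M, ∀ φ ∈ s, φ.Realize (Sum.elim u fun _ => y) := by
      intro s hs
      have hchoice : ∀ ψ : {ψ // ψ ∈ s}, ∃ a : α, ∀ y : M,
          ((a ∈ Lo → v a < y) ∧ (a ∉ Lo → y < v a)) →
          ψ.1.Realize (Sum.elim u fun _ => y) := by
        rintro ⟨ψ, hψ⟩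
        rcases hs hψ with hlo | hhi
        · obtain ⟨t, rfl⟩ := hlo
          obtain ⟨a, haLo, hav⟩ := hTloS t.2
          refine ⟨a, fun y hy => ?_⟩
          rw [hflo t y, ← hav]
          exact hy.1 haLo
        · obtain ⟨t, rfl⟩ := hhi
          obtain ⟨a, haHi, hav⟩ := hThiS t.2
          refine ⟨a, fun y hy => ?_⟩
          rw [hfhi t y, ← hav]
          exact hy.2 haHi
      choose ac hac using hchoice
      obtain ⟨y, -, hy2, hy3⟩ := K (Finset.image ac s.attach) ∅ (by intro ψ hψ; rw [Finset.coe_empty] at hψ; exact absurd hψ (Set.notMem_empty ψ))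
      refine ⟨y, fun φ hφ => ?_⟩
      refine hac ⟨φ, hφ⟩ y ⟨?_, ?_⟩
      · exact fun h => hy2 _ (Finset.mem_image_of_mem ac (s.mem_attach ⟨φ, hφ⟩)) h
      · exact fun h => hy3 _ (Finset.mem_image_of_mem ac (s.mem_attach ⟨φ, hφ⟩)) h
    obtain ⟨x, hx⟩ := hsat γ u hγ q qfin
    have hxlo : ∀ a ∈ Lo, v a < x := by
      intro a ha
      obtain ⟨t, htT, hle⟩ := hTlodom (v a) ⟨a, ha, rfl⟩
      have h1 := (hflo ⟨t, htT⟩ x).1 (hx _ (Or.inl ⟨⟨t, htT⟩, rfl⟩))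
      exact lt_of_le_of_lt hle h1
    have hxhi : ∀ a ∉ Lo, x < v a := by
      intro a ha
      obtain ⟨t, htT, hle⟩ := hThidom (v a) ⟨a, ha, rfl⟩
      have h1 := (hfhi ⟨t, htT⟩ x).1 (hx _ (Or.inr ⟨⟨t, htT⟩, rfl⟩))
      exact lt_of_lt_of_le h1 hle
    refine ⟨x, fun φ hφ => ?_⟩
    obtain ⟨y, hy1, hy2, hy3⟩ :=
      K (φ.freeVarFinset.preimage Sum.inl Sum.inl_injective.injOn) {φ}
        (by intro ψ hψ; rw [Finset.mem_coe, Finset.mem_singleton] at hψ; subst hψ; exact hφ)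
    have hyreal := hy1 φ (Finset.mem_singleton_self φ)
    refine (formula_realize_iff_of_samePos φ
      (Sum.elim v fun _ => y) (Sum.elim v fun _ => x) ?_).1 hyreal
    rintro (a | k) hi (a' | k') hj
    · exact Iff.rfl
    · simp only [Sum.elim_inl, Sum.elim_inr]
      have haA : a ∈ φ.freeVarFinset.preimage Sum.inl Sum.inl_injective.injOn :=
        Finset.mem_preimage.2 hi
      by_cases haLo : a ∈ Lo
      · exact iff_of_true (hy2 a haA haLo).le (hxlo a haLo).le
      · exact iff_of_false (not_le.2 (hy3 a haA haLo)) (not_le.2 (hxhi a haLo))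
    · simp only [Sum.elim_inl, Sum.elim_inr]
      have haA : a' ∈ φ.freeVarFinset.preimage Sum.inl Sum.inl_injective.injOn :=
        Finset.mem_preimage.2 hj
      by_cases haLo : a' ∈ Lo
      · exact iff_of_false (not_le.2 (hy2 a' haA haLo)) (not_le.2 (hxlo a' haLo))
      · exact iff_of_true (hy3 a' haA haLo).le (hxhi a' haLo).le
    · exact iff_of_true le_rfl le_rfl

end Paper
end

section
/- Let T_rg be the theory of the random graph and let κ be a cardinal with κ > cf(κ) + ℵ₀ (i.e. κ is singular and uncountable). Then T_rg has a model that is κ-saturated but not κ⁺-saturated. -/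
open FirstOrder Language Cardinal

namespace Paper

/-- The Rado (random) graph on `ℕ`, via the symmetrized BIT predicate. -/
def radoGraph : SimpleGraph ℕ where
  Adj m n := m ≠ n ∧ (Nat.testBit m n ∨ Nat.testBit n m)
  symm := by
    refine ⟨?_⟩
    intro m n h
    exact ⟨h.1.symm, h.2.symm⟩
  loopless := by
    refine ⟨?_⟩
    intro m h
    exact h.1 rfl

noncomputable instance radoStructure : Language.graph.Structure ℕ := radoGraph.structure

/-- The complete first-order theory of the countable random graph. -/
noncomputable def Trg : Language.graph.Theory := Language.graph.completeTheory ℕ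

/-! ### Auxiliary material: the extension property for graphs -/

/-- A graph has the `μ`-extension property if every adjacency pattern over a vertex set of
cardinality less than `μ` is realized by a vertex outside that set. -/
def EP {V : Type} (G : SimpleGraph V) (μ : Cardinal) : Prop :=
  ∀ S : Set V, #S < μ → ∀ c : V → Prop, ∃ x, x ∉ S ∧ ∀ a ∈ S, (G.Adj x a ↔ c a)

lemma EP.mono {V : Type} {G : SimpleGraph V} {μ μ' : Cardinal} (h : EP G μ') (hle : μ ≤ μ') :
    EP G μ := fun S hS c => h S (hS.trans_le hle) c

instance : Std.Commutative Nat.lor := ⟨Nat.lor_comm⟩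
instance : Std.Associative Nat.lor := ⟨Nat.lor_assoc⟩

lemma tb (s : Finset ℕ) (b : ℕ) : (s.fold Nat.lor 0 (2 ^ ·)).testBit b = true ↔ b ∈ s := by
  classical
  induction s using Finset.induction_on with
  | empty => simp
  | @insert a s ha ih =>
    rw [Finset.fold_insert ha]
    have : Nat.lor (2^a) (s.fold Nat.lor 0 (2 ^ ·)) = (2^a) ||| (s.fold Nat.lor 0 (2 ^ ·)) := rfl
    rw [this, Nat.testBit_lor, Nat.testBit_two_pow, Bool.or_eq_true, ih, Finset.mem_insert,
      decide_eq_true_iff, eq_comm]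

lemma rado_EP : EP radoGraph ℵ₀ := by
  classical
  intro S hS c
  have hfin : S.Finite := Cardinal.lt_aleph0_iff_set_finite.mp hS
  set F := hfin.toFinset with hF
  set M := F.sup id + 1 with hM
  set T := F.filter (fun a => c a) with hT
  set x := (insert M T).fold Nat.lor 0 (2 ^ ·) with hx
  have hxbit : ∀ b, x.testBit b = true ↔ (b ∈ insert M T) := fun b => tb _ b
  have hxM : 2 ^ M ≤ x := Nat.ge_two_pow_of_testBit ((hxbit M).mpr (Finset.mem_insert_self _ _))
  have haM : ∀ a ∈ S, a < M := by
    intro a ha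
    have : a ≤ F.sup id := Finset.le_sup (f := id) (hfin.mem_toFinset.mpr ha)
    omega
  have haX : ∀ a ∈ S, a < x := by
    intro a ha
    have h1 := haM a ha
    have h2 : M < 2 ^ M := Nat.lt_two_pow_self (n := M)
    omega
  refine ⟨x, fun hxS => absurd (haX x hxS) (lt_irrefl x), ?_⟩
  intro a ha
  have hne : x ≠ a := (haX a ha).ne'
  have hax : a.testBit x = false := by
    apply Nat.testBit_eq_false_of_lt
    calc a < 2 ^ M := lt_of_lt_of_le (haM a ha) (Nat.le_of_lt (Nat.lt_two_pow_self (n := M)))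
    _ ≤ 2 ^ x := Nat.pow_le_pow_right (by norm_num) (le_trans (Nat.le_of_lt (Nat.lt_two_pow_self (n := M))) hxM)
  have hmem : a ∈ insert M T ↔ c a := by
    rw [Finset.mem_insert, hT, Finset.mem_filter]
    constructor
    · rintro (rfl | ⟨-, hc⟩)
      · exact absurd (haM _ ha) (lt_irrefl _)
      · exact hc
    · intro hc; exact Or.inr ⟨hfin.mem_toFinset.mpr ha, hc⟩
  constructor
  · rintro ⟨-, hbit | hbit⟩
    · exact hmem.mp ((hxbit a).mp hbit)
    · rw [hax] at hbit; exact absurd hbit (by simp)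
  · intro hc
    exact ⟨hne, Or.inl ((hxbit a).mpr (hmem.mpr hc))⟩

/-! ### Back-and-forth equivalence between graphs with the extension property -/

lemma term_eq_var {δ : Type*} (t : Language.graph.Term δ) : ∃ i, t = Term.var i := by
  cases t with
  | var i => exact ⟨i, rfl⟩
  | func f ts => exact isEmptyElim f

/-- One-point extension of a partial matching. -/
lemma ext_point {V W : Type} (G : SimpleGraph V) (H : SimpleGraph W) {μ : Cardinal}
    (hH : EP H μ) {ι : Type} (hι : #ι < μ) (v : ι → V) (w : ι → W)
    (h : ∀ i j, (v i = v j ↔ w i = w j) ∧ (G.Adj (v i) (v j) ↔ H.Adj (w i) (w j))) (x : V) :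
    ∃ y : W, ∀ i, (x = v i ↔ y = w i) ∧ (G.Adj x (v i) ↔ H.Adj y (w i)) := by
  by_cases hx : ∃ i, v i = x
  · obtain ⟨i₀, hi₀⟩ := hx
    refine ⟨w i₀, fun i => ⟨?_, ?_⟩⟩
    · rw [← hi₀]; exact (h i₀ i).1
    · rw [← hi₀]; exact (h i₀ i).2
  · obtain ⟨y, hyr, hy⟩ := hH (Set.range w) (lt_of_le_of_lt Cardinal.mk_range_le hι)
      (fun a => ∃ i, w i = a ∧ G.Adj x (v i))
    refine ⟨y, fun i => ⟨?_, ?_⟩⟩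
    · constructor
      · intro he; exact absurd ⟨i, he.symm⟩ hx
      · intro he; exact absurd ⟨i, rfl⟩ (he ▸ hyr)
    · rw [hy (w i) ⟨i, rfl⟩]
      constructor
      · intro ha; exact ⟨i, rfl, ha⟩
      · rintro ⟨j, hw, ha⟩
        rwa [(h j i).1.mpr hw] at ha

lemma realize_equal_var {V γ : Type} {n : ℕ} (G : SimpleGraph V) (i j : γ ⊕ Fin n)
    (u : γ ⊕ Fin n → V) :
    @BoundedFormula.Realize Language.graph V G.structure γ n
      (BoundedFormula.equal (Term.var i) (Term.var j)) (u ∘ Sum.inl) (u ∘ Sum.inr) ↔ u i = u j := by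
  letI := G.structure
  have : (BoundedFormula.equal (Term.var i) (Term.var j) :
      Language.graph.BoundedFormula γ n) = Term.bdEqual (Term.var i) (Term.var j) := rfl
  rw [this, BoundedFormula.realize_bdEqual, Term.realize_var, Term.realize_var,
    Sum.elim_comp_inl_inr]

lemma realize_rel_var {V γ : Type} {n : ℕ} (G : SimpleGraph V)
    (ts : Fin 2 → Language.graph.Term (γ ⊕ Fin n)) (i j : γ ⊕ Fin n)
    (h1 : ts 0 = Term.var i) (h2 : ts 1 = Term.var j) (u : γ ⊕ Fin n → V) :
    @BoundedFormula.Realize Language.graph V G.structure γ n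
      (BoundedFormula.rel Language.graphRel.adj ts) (u ∘ Sum.inl) (u ∘ Sum.inr) ↔
      G.Adj (u i) (u j) := by
  letI := G.structure
  show G.Adj (Term.realize (Sum.elim (u ∘ Sum.inl) (u ∘ Sum.inr)) (ts 0))
      (Term.realize (Sum.elim (u ∘ Sum.inl) (u ∘ Sum.inr)) (ts 1)) ↔ _
  rw [h1, h2, Term.realize_var, Term.realize_var, Sum.elim_comp_inl_inr]

theorem bf {V W : Type} (G : SimpleGraph V) (H : SimpleGraph W) {μ : Cardinal}
    (hμ : ℵ₀ ≤ μ) (hG : EP G μ) (hH : EP H μ) {γ : Type} (hγ : #γ < μ) :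
    ∀ {n : ℕ} (φ : Language.graph.BoundedFormula γ n) (v : γ ⊕ Fin n → V) (w : γ ⊕ Fin n → W),
    (∀ i j, (v i = v j ↔ w i = w j) ∧ (G.Adj (v i) (v j) ↔ H.Adj (w i) (w j))) →
    (@BoundedFormula.Realize Language.graph V G.structure γ n φ (v ∘ Sum.inl) (v ∘ Sum.inr) ↔
     @BoundedFormula.Realize Language.graph W H.structure γ n φ (w ∘ Sum.inl) (w ∘ Sum.inr)) := by
  letI := G.structure
  letI := H.structure
  have hcard : ∀ n : ℕ, #(γ ⊕ Fin n) < μ := by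
    intro n
    have he : #(γ ⊕ Fin n) = #γ + (n : Cardinal) := by simp
    rw [he]
    exact Cardinal.add_lt_of_lt hμ hγ (lt_of_lt_of_le (Cardinal.nat_lt_aleph0 n) hμ)
  intro n φ
  induction φ with
  | falsum => exact fun v w h => Iff.rfl
  | @equal n t₁ t₂ =>
    intro v w h
    obtain ⟨i₁, rfl⟩ := term_eq_var t₁
    obtain ⟨i₂, rfl⟩ := term_eq_var t₂
    rw [realize_equal_var G, realize_equal_var H]
    exact (h i₁ i₂).1
  | @rel n l R ts =>
    intro v w h
    cases R
    obtain ⟨i₁, h₁⟩ := term_eq_var (ts 0)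
    obtain ⟨i₂, h₂⟩ := term_eq_var (ts 1)
    rw [realize_rel_var G ts i₁ i₂ h₁ h₂, realize_rel_var H ts i₁ i₂ h₁ h₂]
    exact (h i₁ i₂).2
  | @imp n f₁ f₂ ih₁ ih₂ =>
    intro v w h
    rw [BoundedFormula.realize_imp, BoundedFormula.realize_imp]
    exact imp_congr (ih₁ v w h) (ih₂ v w h)
  | @all n f ih =>
    intro v w h
    rw [BoundedFormula.realize_all, BoundedFormula.realize_all]
    have key : ∀ (x : V) (y : W),
        (∀ i, (x = v i ↔ y = w i) ∧ (G.Adj x (v i) ↔ H.Adj y (w i))) →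
        ((BoundedFormula.Realize (L := Language.graph) (M := V) f (v ∘ Sum.inl)
            (Fin.snoc (v ∘ Sum.inr) x)) ↔
          (BoundedFormula.Realize (L := Language.graph) (M := W) f (w ∘ Sum.inl)
            (Fin.snoc (w ∘ Sum.inr) y))) := by
      intro x y hxy
      have aux : ∀ i : γ ⊕ Fin (n + 1),
          ((Sum.elim (v ∘ Sum.inl) (Fin.snoc (v ∘ Sum.inr) x)) i = x ∧
            (Sum.elim (w ∘ Sum.inl) (Fin.snoc (w ∘ Sum.inr) y)) i = y) ∨
          (∃ i₀ : γ ⊕ Fin n,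
            (Sum.elim (v ∘ Sum.inl) (Fin.snoc (v ∘ Sum.inr) x)) i = v i₀ ∧
            (Sum.elim (w ∘ Sum.inl) (Fin.snoc (w ∘ Sum.inr) y)) i = w i₀) := by
        rintro (g | k)
        · exact Or.inr ⟨Sum.inl g, rfl, rfl⟩
        · refine Fin.lastCases ?_ ?_ k
          · exact Or.inl ⟨by simp, by simp⟩
          · intro k₀
            refine Or.inr ⟨Sum.inr k₀, by simp, by simp⟩
      have h' : ∀ i j,
          ((Sum.elim (v ∘ Sum.inl) (Fin.snoc (v ∘ Sum.inr) x)) i =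
            (Sum.elim (v ∘ Sum.inl) (Fin.snoc (v ∘ Sum.inr) x)) j ↔
           (Sum.elim (w ∘ Sum.inl) (Fin.snoc (w ∘ Sum.inr) y)) i =
            (Sum.elim (w ∘ Sum.inl) (Fin.snoc (w ∘ Sum.inr) y)) j) ∧
          (G.Adj ((Sum.elim (v ∘ Sum.inl) (Fin.snoc (v ∘ Sum.inr) x)) i)
            ((Sum.elim (v ∘ Sum.inl) (Fin.snoc (v ∘ Sum.inr) x)) j) ↔
           H.Adj ((Sum.elim (w ∘ Sum.inl) (Fin.snoc (w ∘ Sum.inr) y)) i)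
            ((Sum.elim (w ∘ Sum.inl) (Fin.snoc (w ∘ Sum.inr) y)) j)) := by
        intro i j
        rcases aux i with ⟨hvi, hwi⟩ | ⟨i₀, hvi, hwi⟩ <;>
          rcases aux j with ⟨hvj, hwj⟩ | ⟨j₀, hvj, hwj⟩ <;> rw [hvi, hwi, hvj, hwj]
        · exact ⟨iff_of_true rfl rfl, iff_of_false G.irrefl H.irrefl⟩
        · exact hxy j₀
        · refine ⟨?_, ?_⟩
          · rw [eq_comm, (hxy i₀).1, eq_comm]
          · rw [G.adj_comm, H.adj_comm]; exact (hxy i₀).2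
        · exact h i₀ j₀
      exact ih (Sum.elim (v ∘ Sum.inl) (Fin.snoc (v ∘ Sum.inr) x))
        (Sum.elim (w ∘ Sum.inl) (Fin.snoc (w ∘ Sum.inr) y)) h'
    constructor
    · intro hall y
      obtain ⟨x, hx⟩ := ext_point H G hG (hcard n) w v
        (fun i j => ⟨(h i j).1.symm, (h i j).2.symm⟩) y
      exact (key x y (fun i => ⟨(hx i).1.symm, (hx i).2.symm⟩)).mp (hall x)
    · intro hall x
      obtain ⟨y, hy⟩ := ext_point G H hH (hcard n) v w h x
      exact (key x y hy).mpr (hall y)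

lemma bf_formula {V W : Type} (G : SimpleGraph V) (H : SimpleGraph W) {μ : Cardinal}
    (hμ : ℵ₀ ≤ μ) (hG : EP G μ) (hH : EP H μ) {γ : Type} (hγ : #γ < μ)
    (φ : Language.graph.Formula γ) (v : γ → V) (w : γ → W)
    (h : ∀ i j, (v i = v j ↔ w i = w j) ∧ (G.Adj (v i) (v j) ↔ H.Adj (w i) (w j))) :
    (@Formula.Realize Language.graph V G.structure γ φ v ↔
     @Formula.Realize Language.graph W H.structure γ φ w) := by
  letI := G.structure
  letI := H.structure
  have hb := bf G H hμ hG hH hγ φ (Sum.elim v Fin.elim0) (Sum.elim w Fin.elim0) ?_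
  · have e2 : (default : Fin 0 → V) = (Sum.elim v Fin.elim0) ∘ Sum.inr :=
      Subsingleton.elim _ _
    have e3 : (default : Fin 0 → W) = (Sum.elim w Fin.elim0) ∘ Sum.inr :=
      Subsingleton.elim _ _
    unfold Formula.Realize
    rw [e2, e3]
    exact hb
  · rintro (g | k) (g' | k')
    · exact (h g g')
    · exact k'.elim0
    · exact k.elim0
    · exact k.elim0

/-! ### The hereditary-set graph construction -/

inductive HW (β : Type) : Type
  | leaf : β → HW β
  | node : (β → HW β) → HW β

namespace HW

def memb {β : Type} (x : HW β) : HW β → Prop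
  | .leaf _ => False
  | .node f => ∃ b, f b = x

noncomputable def rnk {β : Type} : HW β → Ordinal.{0}
  | .leaf _ => 0
  | .node f => ⨆ b, Order.succ (rnk (f b))

lemma rnk_lt_node {β : Type} (f : β → HW β) (b : β) : rnk (f b) < rnk (HW.node f) := by
  rw [show rnk (HW.node f) = ⨆ b, Order.succ (rnk (f b)) from rfl]
  exact (Order.lt_succ _).trans_le (le_ciSup (Ordinal.bddAbove_range _) b)

lemma rnk_lt_of_memb {β : Type} {x y : HW β} (h : x.memb y) : rnk x < rnk y := by
  cases y with
  | leaf b => exact absurd h (by simp [memb])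
  | node f => obtain ⟨b, hb⟩ := h; exact hb ▸ rnk_lt_node f b

end HW

def GW (β : Type) : SimpleGraph (HW β) where
  Adj x y := x ≠ y ∧ (x.memb y ∨ y.memb x)
  symm := ⟨fun _ _ h => ⟨h.1.symm, h.2.symm⟩⟩
  loopless := ⟨fun _ h => h.1 rfl⟩

lemma exists_enum {β : Type} (X : Set (HW β)) (hne : X.Nonempty) (hX : #X ≤ #β) :
    ∃ σ : β → HW β, Set.range σ = X := by
  classical
  obtain ⟨f⟩ := Cardinal.le_def _ _ |>.mp hX
  obtain ⟨x₀, hx₀⟩ := hne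
  refine ⟨fun b => if h : ∃ x : X, f x = b then (Classical.choose h : X).val else x₀, ?_⟩
  ext z
  constructor
  · rintro ⟨b, rfl⟩
    by_cases h : ∃ x : X, f x = b
    · simp only [dif_pos h]; exact (Classical.choose h).2
    · simp only [dif_neg h]; exact hx₀
  · intro hz
    refine ⟨f ⟨z, hz⟩, ?_⟩
    have h : ∃ x : X, f x = f ⟨z, hz⟩ := ⟨⟨z, hz⟩, rfl⟩
    dsimp only
    rw [dif_pos h]
    have := f.injective (Classical.choose_spec h)
    rw [this]

lemma key_wit {β : Type} [Nonempty β] (hβ : ℵ₀ ≤ #β) (S : Set (HW β)) (hS : #S ≤ #β)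
    (c : HW β → Prop) :
    ∃ x, x ∉ S ∧ (∀ a ∈ S, ((GW β).Adj x a ↔ c a)) ∧
      #{b : β | (GW β).Adj x (HW.leaf b)} ≤ #S + 1 := by
  classical
  obtain ⟨τ, hτ⟩ : ∃ τ : β → HW β, S ⊆ Set.range τ := by
    by_cases hne : S.Nonempty
    · obtain ⟨τ, hτ⟩ := exists_enum S hne hS
      exact ⟨τ, hτ ▸ subset_rfl⟩
    · exact ⟨fun b => HW.leaf b,
        by rw [Set.not_nonempty_iff_eq_empty.mp hne]; exact Set.empty_subset _⟩
  set t₀ : HW β := HW.node τ with ht₀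
  set t : HW β := HW.node (fun _ => t₀) with ht
  have hrs : ∀ s ∈ S, HW.rnk s < HW.rnk t₀ := by
    intro s hs
    obtain ⟨b, rfl⟩ := hτ hs
    exact HW.rnk_lt_node τ b
  have hrt₀ : HW.rnk t₀ < HW.rnk t := HW.rnk_lt_node _ (Classical.arbitrary β)
  set X : Set (HW β) := insert t {a ∈ S | c a} with hX
  have hXcard : #X ≤ #S + 1 := by
    refine le_trans (Cardinal.mk_insert_le) ?_
    have : #{a ∈ S | c a} ≤ #S := Cardinal.mk_le_mk_of_subset (Set.sep_subset _ _)
    exact add_le_add_left this 1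
  have hXβ : #X ≤ #β := by
    refine le_trans hXcard (Cardinal.add_le_of_le hβ hS ?_)
    exact le_trans (le_of_lt Cardinal.one_lt_aleph0) hβ
  obtain ⟨σ, hσ⟩ := exists_enum X (Set.insert_nonempty _ _) hXβ
  set w : HW β := HW.node σ with hw
  have hmembw : ∀ z, z.memb w ↔ z ∈ X := by
    intro z
    constructor
    · rintro ⟨b, rfl⟩; rw [← hσ]; exact ⟨b, rfl⟩
    · intro hz; rw [← hσ] at hz; obtain ⟨b, rfl⟩ := hz; exact ⟨b, rfl⟩
  have hrtw : HW.rnk t < HW.rnk w :=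
    HW.rnk_lt_of_memb ((hmembw t).mpr (Set.mem_insert _ _))
  have hsw : ∀ s ∈ S, HW.rnk s < HW.rnk w :=
    fun s hs => lt_trans (lt_trans (hrs s hs) hrt₀) hrtw
  refine ⟨w, ?_, ?_, ?_⟩
  · intro hwS
    exact lt_irrefl _ (hsw w hwS)
  · intro a ha
    constructor
    · rintro ⟨hne, hm | hm⟩
      · exact absurd (HW.rnk_lt_of_memb hm) (not_lt_of_gt (hsw a ha))
      · rcases (hmembw a).mp hm with rfl | ⟨-, hc⟩
        · exact absurd (lt_trans (hrs t ha) hrt₀) (lt_irrefl _)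
        · exact hc
    · intro hc
      refine ⟨?_, Or.inr ((hmembw a).mpr (Set.mem_insert_of_mem _ ⟨ha, hc⟩))⟩
      intro he
      exact lt_irrefl _ (he ▸ hsw a ha)
  · have hinj : ∀ b ∈ {b : β | (GW β).Adj w (HW.leaf b)}, (HW.leaf b : HW β) ∈ X := by
      intro b hb
      rcases hb.2 with hm | hm
      · exact absurd hm (by simp [HW.memb])
      · exact (hmembw _).mp hm
    calc #{b : β | (GW β).Adj w (HW.leaf b)}
        ≤ #X := by
          refine Cardinal.mk_le_of_injective (f := fun p => (⟨HW.leaf p.1, hinj p.1 p.2⟩ : X)) ?_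
          intro p q hpq
          have : HW.leaf p.1 = (HW.leaf q.1 : HW β) := congrArg Subtype.val hpq
          exact Subtype.ext (HW.leaf.inj this)
      _ ≤ #S + 1 := hXcard

/-- The predicate cutting out the vertices adjacent to fewer than `#β` of the special points. -/
def NTpred (β : Type) (x : HW β) : Prop := #{b : β | (GW β).Adj x (HW.leaf b)} < #β

/-- The carrier of the model. -/
def NT (β : Type) : Type := {x : HW β // NTpred β x}

/-- The induced graph on `NT β`. -/
def NG (β : Type) : SimpleGraph (NT β) := SimpleGraph.comap Subtype.val (GW β)

lemma leaf_NT {β : Type} (hβ : ℵ₀ ≤ #β) (b : β) : NTpred β (HW.leaf b) := by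
  have he : {b' : β | (GW β).Adj (HW.leaf b) (HW.leaf b')} = ∅ := by
    ext b'
    simp only [Set.mem_setOf_eq, Set.mem_empty_iff_false, iff_false]
    rintro ⟨-, hm | hm⟩ <;> exact (by simp [HW.memb] at hm)
  rw [NTpred, he]
  simpa using lt_of_lt_of_le Cardinal.aleph0_pos hβ

lemma NG_EP {β : Type} [Nonempty β] (hβ : ℵ₀ ≤ #β) : EP (NG β) #β := by
  intro S hS c
  have hS' : #(Subtype.val '' S : Set (HW β)) ≤ #β :=
    le_of_lt (lt_of_le_of_lt Cardinal.mk_image_le hS)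
  obtain ⟨x, hxS, hadj, hbd⟩ := key_wit hβ (Subtype.val '' S) hS'
    (fun z => ∃ h : NTpred β z, c ⟨z, h⟩)
  have hxN : NTpred β x := lt_of_le_of_lt hbd
    (Cardinal.add_lt_of_lt hβ (lt_of_le_of_lt Cardinal.mk_image_le hS)
      (lt_of_lt_of_le Cardinal.one_lt_aleph0 hβ))
  refine ⟨⟨x, hxN⟩, ?_, ?_⟩
  · intro hmem
    exact hxS ⟨⟨x, hxN⟩, hmem, rfl⟩
  · intro a ha
    have hiff := hadj a.val ⟨a, ha, rfl⟩
    rw [show (NG β).Adj ⟨x, hxN⟩ a ↔ (GW β).Adj x a.val from Iff.rfl, hiff]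
    constructor
    · rintro ⟨h, hc⟩
      rwa [show (⟨a.val, h⟩ : NT β) = a from Subtype.ext rfl] at hc
    · intro hc
      exact ⟨a.2, by rwa [show (⟨a.val, a.2⟩ : NT β) = a from Subtype.ext rfl]⟩

lemma realize_adj_formula {V : Type} (G : SimpleGraph V) {γ : Type} (i j : γ) (u : γ → V) :
    @Formula.Realize Language.graph V G.structure γ
      (Language.adj.formula₂ (Term.var i) (Term.var j)) u ↔ G.Adj (u i) (u j) := by
  letI := G.structure
  rw [Formula.realize_rel₂]
  show G.Adj (![Term.realize u (Term.var i), Term.realize u (Term.var j)] 0)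
    (![Term.realize u (Term.var i), Term.realize u (Term.var j)] 1) ↔ _
  simp

lemma realize_sentence_iff_default {M : Type} (G : SimpleGraph M)
    (φ : Language.graph.Sentence) (u : Empty → M) :
    @Sentence.Realize Language.graph M G.structure φ ↔
      @Formula.Realize Language.graph M G.structure Empty φ u := by
  letI := G.structure
  unfold Sentence.Realize
  rw [Subsingleton.elim (default : Empty → M) u]

/-- If `κ > cf(κ) + ℵ₀`, then the theory of the random graph has a
model which is `κ`-saturated but not `κ⁺`-saturated. -/
theorem statement3 (κ : Cardinal) (hκ : κ.ord.cof + Cardinal.aleph0 < κ) :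
    ∃ (N : Type) (inst : Language.graph.Structure N),
      letI := inst
      (N ⊨ Trg) ∧ IsSaturated Language.graph N κ ∧
        ¬ IsSaturated Language.graph N (Order.succ κ) := by
  classical
  have hℵκ : ℵ₀ < κ := lt_of_le_of_lt le_add_self hκ
  set β : Type := Quotient.out κ with hβdef
  have hβκ : #β = κ := Cardinal.mk_out κ
  have hβ : ℵ₀ ≤ #β := by rw [hβκ]; exact le_of_lt hℵκ
  haveI : Infinite β := Cardinal.infinite_iff.mpr hβ
  haveI : Nonempty β := inferInstance
  have hEP : EP (NG β) #β := NG_EP hβ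
  have hEPℵ : EP (NG β) ℵ₀ := hEP.mono hβ
  letI inst : Language.graph.Structure (NT β) := (NG β).structure
  refine ⟨NT β, inst, ?_, ?_, ?_⟩
  · -- N ⊨ Trg
    rw [Theory.model_iff]
    intro φ hφ
    have hna : ℕ ⊨ φ := hφ
    have hiff := bf_formula radoGraph (NG β) le_rfl rado_EP hEPℵ
      (by simpa using Cardinal.aleph0_pos : #(Empty) < ℵ₀) φ
      (default : Empty → ℕ) (default : Empty → NT β) (fun i => isEmptyElim i)
    have hna' : @Formula.Realize Language.graph ℕ radoGraph.structure Empty φ default :=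
      (realize_sentence_iff_default radoGraph φ default).mp hna
    exact (realize_sentence_iff_default (NG β) φ default).mpr (hiff.mp hna')
  · -- κ-saturated
    intro α v hα p hfin
    have hα' : #α < #β := by rwa [hβκ]
    -- the directed family of finite subsets of p
    let D := {t : Finset (Language.graph.Formula (α ⊕ Fin 1)) // ↑t ⊆ p}
    letI : SemilatticeSup D := Subtype.semilatticeSup (by
      intro x y hx hy
      rw [Finset.sup_eq_union, Finset.coe_union]
      exact Set.union_subset hx hy)
    haveI : Nonempty D := ⟨⟨∅, by simp⟩⟩
    let U : Ultrafilter D := Ultrafilter.of Filter.atTop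
    have hUp : ∀ t₀ : D, {t | t₀ ≤ t} ∈ (U : Filter D) :=
      fun t₀ => Ultrafilter.of_le Filter.atTop (Filter.mem_atTop t₀)
    -- realizers of finite subsets
    let F : D → NT β := fun t => Classical.choose (hfin t.1 t.2)
    have hF : ∀ t : D, ∀ φ ∈ t.1, Formula.Realize φ (Sum.elim v fun _ => F t) :=
      fun t => Classical.choose_spec (hfin t.1 t.2)
    -- a limit point
    obtain ⟨xs, key⟩ : ∃ x : NT β, ∀ a : α,
        {t : D | (F t = v a ↔ x = v a) ∧
          ((NG β).Adj (F t) (v a) ↔ (NG β).Adj x (v a))} ∈ (U : Filter D) := by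
      by_cases hcase : ∃ i : α, {t : D | F t = v i} ∈ (U : Filter D)
      · obtain ⟨i₀, hi₀⟩ := hcase
        refine ⟨v i₀, fun a => Filter.mem_of_superset hi₀ ?_⟩
        intro t ht
        simp only [Set.mem_setOf_eq] at ht ⊢
        rw [ht]
        exact ⟨Iff.rfl, Iff.rfl⟩
      · push_neg at hcase
        obtain ⟨x, hxr, hxadj⟩ := hEP (Set.range v)
          (lt_of_le_of_lt Cardinal.mk_range_le hα')
          (fun z => {t : D | (NG β).Adj (F t) z} ∈ (U : Filter D))
        refine ⟨x, fun a => ?_⟩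
        have h1 : {t : D | F t = v a ↔ x = v a} ∈ (U : Filter D) := by
          have hcompl : {t : D | F t = v a}ᶜ ∈ (U : Filter D) :=
            Ultrafilter.compl_mem_iff_notMem.mpr (hcase a)
          refine Filter.mem_of_superset hcompl ?_
          intro t ht
          exact iff_of_false ht (fun he => hxr ⟨a, he.symm⟩)
        have h2 : {t : D | (NG β).Adj (F t) (v a) ↔ (NG β).Adj x (v a)} ∈ (U : Filter D) := by
          have hx := hxadj (v a) ⟨a, rfl⟩
          by_cases hc : {t : D | (NG β).Adj (F t) (v a)} ∈ (U : Filter D)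
          · refine Filter.mem_of_superset hc ?_
            intro t ht
            exact iff_of_true ht (hx.mpr hc)
          · refine Filter.mem_of_superset
              (Ultrafilter.compl_mem_iff_notMem.mpr hc) ?_
            intro t ht
            exact iff_of_false ht (fun h => hc (hx.mp h))
        exact Filter.mem_of_superset (Filter.inter_mem h1 h2) (fun t ht => ⟨ht.1, ht.2⟩)
    refine ⟨xs, fun φ hφ => ?_⟩
    -- restrict to free variables
    have hsub : ↑(φ.freeVarFinset) ⊆ (↑(φ.freeVarFinset) : Set (α ⊕ Fin 1)) := subset_rfl
    have hTset : {t : D | φ ∈ t.1} ∈ (U : Filter D) := by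
      refine Filter.mem_of_superset (hUp ⟨{φ}, by simpa using hφ⟩) ?_
      intro t ht
      exact Finset.singleton_subset_iff.mp ht
    have hQ : ∀ e : α ⊕ Fin 1,
        Sum.elim (fun a => {t : D | (F t = v a ↔ xs = v a) ∧
          ((NG β).Adj (F t) (v a) ↔ (NG β).Adj xs (v a))})
          (fun _ => (Set.univ : Set D)) e ∈ (U : Filter D) := by
      rintro (a | k)
      · exact key a
      · exact Filter.univ_mem
    have hmain : ({t : D | φ ∈ t.1} ∩
        ⋂ e ∈ φ.freeVarFinset, Sum.elim (fun a => {t : D | (F t = v a ↔ xs = v a) ∧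
          ((NG β).Adj (F t) (v a) ↔ (NG β).Adj xs (v a))})
          (fun _ => (Set.univ : Set D)) e) ∈ (U : Filter D) :=
      Filter.inter_mem hTset ((Filter.biInter_finset_mem _).mpr (fun e _ => hQ e))
    obtain ⟨t, ht⟩ := Ultrafilter.nonempty_of_mem hmain
    have htφ : φ ∈ t.1 := ht.1
    have htQ : ∀ e ∈ φ.freeVarFinset, ∀ a : α, e = Sum.inl a →
        ((F t = v a ↔ xs = v a) ∧
          ((NG β).Adj (F t) (v a) ↔ (NG β).Adj xs (v a))) := by
      intro e he a hea
      have := Set.mem_iInter₂.mp ht.2 e he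
      rw [hea] at this
      exact this
    -- apply back-and-forth on the restricted formula
    have hγfin : #(↑(↑(φ.freeVarFinset) : Set (α ⊕ Fin 1))) < #β :=
      lt_of_lt_of_le (Set.Finite.lt_aleph0 (φ.freeVarFinset.finite_toSet)) hβ
    have hmatch : ∀ i j : (↑(φ.freeVarFinset) : Set (α ⊕ Fin 1)),
        (((Sum.elim v fun _ => F t) ∘ Subtype.val) i = ((Sum.elim v fun _ => F t) ∘ Subtype.val) j ↔
          ((Sum.elim v fun _ => xs) ∘ Subtype.val) i = ((Sum.elim v fun _ => xs) ∘ Subtype.val) j) ∧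
        ((NG β).Adj (((Sum.elim v fun _ => F t) ∘ Subtype.val) i)
            (((Sum.elim v fun _ => F t) ∘ Subtype.val) j) ↔
          (NG β).Adj (((Sum.elim v fun _ => xs) ∘ Subtype.val) i)
            (((Sum.elim v fun _ => xs) ∘ Subtype.val) j)) := by
      rintro ⟨i, hi⟩ ⟨j, hj⟩
      rcases i with a | k <;> rcases j with a' | k'
      · exact ⟨Iff.rfl, Iff.rfl⟩
      · -- param vs new point
        have hk := (htQ (Sum.inl a) (by simpa using hi) a rfl)
        refine ⟨?_, ?_⟩
        · show v a = F t ↔ v a = xs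
          rw [eq_comm, hk.1, eq_comm]
        · show (NG β).Adj (v a) (F t) ↔ (NG β).Adj (v a) xs
          rw [(NG β).adj_comm, hk.2, (NG β).adj_comm]
      · have hk := (htQ (Sum.inl a') (by simpa using hj) a' rfl)
        exact ⟨hk.1, hk.2⟩
      · exact ⟨iff_of_true rfl rfl, iff_of_false (NG β).irrefl (NG β).irrefl⟩
    have hiff := bf_formula (NG β) (NG β) hβ hEP hEP hγfin
      (φ.restrictFreeVar (Set.inclusion hsub))
      ((Sum.elim v fun _ => F t) ∘ Subtype.val)
      ((Sum.elim v fun _ => xs) ∘ Subtype.val) hmatch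
    have h1 : Formula.Realize φ (Sum.elim v fun _ => F t) := hF t φ htφ
    have h2 : (φ.restrictFreeVar (Set.inclusion hsub)).Realize
        ((Sum.elim v fun _ => F t) ∘ Subtype.val) (default : Fin 0 → NT β) :=
      (BoundedFormula.realize_restrictFreeVar' hsub).mpr h1
    have h3 : (φ.restrictFreeVar (Set.inclusion hsub)).Realize
        ((Sum.elim v fun _ => xs) ∘ Subtype.val) (default : Fin 0 → NT β) := hiff.mp h2
    exact (BoundedFormula.realize_restrictFreeVar' hsub).mp h3
  · -- not κ⁺-saturated
    intro hsat
    let φb : β → Language.graph.Formula (β ⊕ Fin 1) := fun b =>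
      Language.adj.formula₂ (Term.var (Sum.inr 0)) (Term.var (Sum.inl b))
    let vL : β → NT β := fun b => ⟨HW.leaf b, leaf_NT hβ b⟩
    have hβlt : #β < Order.succ κ := by rw [hβκ]; exact Order.lt_succ κ
    have hfin : ∀ s : Finset (Language.graph.Formula (β ⊕ Fin 1)),
        ↑s ⊆ Set.range φb →
        ∃ x : NT β, ∀ φ ∈ s, φ.Realize (Sum.elim vL fun _ => x) := by
      intro s hs
      have hsel : ∀ ψ : {ψ // ψ ∈ s}, ∃ b, φb b = ψ.val := fun ψ => hs ψ.2
      choose g hg using hsel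
      obtain ⟨x, hxS, hadj⟩ := hEP (Set.range (fun ψ : {ψ // ψ ∈ s} => vL (g ψ)))
        (lt_of_le_of_lt Cardinal.mk_range_le
          (lt_of_lt_of_le (Cardinal.lt_aleph0_of_finite _) hβ)) (fun _ => True)
      refine ⟨x, fun ψ hψ => ?_⟩
      have hgg : φb (g ⟨ψ, hψ⟩) = ψ := hg ⟨ψ, hψ⟩
      rw [← hgg]
      rw [realize_adj_formula (NG β) (Sum.inr 0) (Sum.inl (g ⟨ψ, hψ⟩))
        (Sum.elim vL fun _ => x)]
      show (NG β).Adj x (vL (g ⟨ψ, hψ⟩))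
      exact (hadj (vL (g ⟨ψ, hψ⟩)) ⟨⟨ψ, hψ⟩, rfl⟩).mpr trivial
    obtain ⟨x, hx⟩ := hsat β vL hβlt (Set.range φb) hfin
    have hall : ∀ b : β, (GW β).Adj x.val (HW.leaf b) := by
      intro b
      have := hx (φb b) ⟨b, rfl⟩
      rw [realize_adj_formula (NG β) (Sum.inr 0) (Sum.inl b) (Sum.elim vL fun _ => x)] at this
      exact this
    have huniv : {b : β | (GW β).Adj x.val (HW.leaf b)} = Set.univ := by
      ext b; simpa using hall b
    have hlt := x.2
    rw [NTpred, huniv] at hlt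
    simp only [Cardinal.mk_univ] at hlt
    exact lt_irrefl _ hlt

end Paper
end

section
/- Let N be a model of bounded Peano arithmetic and let D₁ be a reasonable initial segment of N (for each x ∈ N and d ∈ D₁, x^d exists in N). Then the closure D₂ = {a ∈ N : ∃ d ∈ D₁ and standard n with a < dⁿ} is also reasonable: for every x ∈ N and every d₂ ∈ D₂, x^{d₂} exists in N. -/
open FirstOrder Language Cardinal

namespace Paper

/-- Function symbols of the language of arithmetic: `0, 1` (arity 0) and `+, *` (arity 2). -/
def arithFunc : ℕ → Type
  | 0 => Fin 2
  | 2 => Fin 2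
  | _ => Empty

/-- Relation symbols of the language of arithmetic: `<` (arity 2). -/
def arithRel : ℕ → Type
  | 2 => Unit
  | _ => Empty

/-- The first-order language of arithmetic `{0, 1, +, *, <}`. -/
def Larith : FirstOrder.Language := ⟨arithFunc, arithRel⟩

section Ops

variable (M : Type) [Larith.Structure M]

/-- The interpretation of `0`. -/
def azero : M := Structure.funMap (L := Larith) (M := M) (n := 0) ((0 : Fin 2) : arithFunc 0) ![]

/-- The interpretation of `1`. -/
def aone : M := Structure.funMap (L := Larith) (M := M) (n := 0) ((1 : Fin 2) : arithFunc 0) ![]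

variable {M}

/-- The interpretation of `+`. -/
def aadd (x y : M) : M :=
  Structure.funMap (L := Larith) (M := M) (n := 2) ((0 : Fin 2) : arithFunc 2) ![x, y]

/-- The interpretation of `*`. -/
def amul (x y : M) : M :=
  Structure.funMap (L := Larith) (M := M) (n := 2) ((1 : Fin 2) : arithFunc 2) ![x, y]

/-- The interpretation of `<`. -/
def alt (x y : M) : Prop :=
  Structure.RelMap (L := Larith) (M := M) (n := 2) ((() : Unit) : arithRel 2) ![x, y]

/-- The standard numerals of `M`. -/
def ofNat (M : Type) [Larith.Structure M] : ℕ → M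
  | 0 => azero M
  | n + 1 => aadd (ofNat M n) (aone M)

end Ops

/-- `Δ₀` (bounded) formulas of arithmetic: built from atomic formulas by boolean
connectives and bounded quantification `∀ x < t`. -/
inductive IsDelta0 {α : Type} : ∀ {n : ℕ}, Larith.BoundedFormula α n → Prop
  | falsum {n} : IsDelta0 (BoundedFormula.falsum : Larith.BoundedFormula α n)
  | equal {n} (t u : Larith.Term (α ⊕ Fin n)) : IsDelta0 (t.bdEqual u)
  | rel {n l} (R : Larith.Relations l) (ts : Fin l → Larith.Term (α ⊕ Fin n)) :
      IsDelta0 (BoundedFormula.rel R ts)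
  | imp {n} {φ ψ : Larith.BoundedFormula α n} :
      IsDelta0 φ → IsDelta0 ψ → IsDelta0 (φ.imp ψ)
  | ball {n} (t : Larith.Term (α ⊕ Fin n)) {φ : Larith.BoundedFormula α (n + 1)} :
      IsDelta0 φ →
      IsDelta0 ((((show Larith.Relations 2 from ()).boundedFormula₂
        (Term.var (Sum.inr (Fin.last n)))
        (t.relabel (Sum.map id Fin.castSucc))).imp φ).all)

/-- A subset of `M^k` definable by a `Δ₀` formula with parameters. -/
def Delta0DefinableRel (M : Type) [Larith.Structure M] (k : ℕ) (S : Set (Fin k → M)) : Prop :=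
  ∃ (p : ℕ) (φ : Larith.BoundedFormula (Fin p) k) (v : Fin p → M),
    IsDelta0 φ ∧ S = {x | φ.Realize v x}

/-- `M` is a model of bounded Peano arithmetic `I∆₀`: the basic axioms of a discretely
ordered commutative semiring together with induction for `Δ₀`-definable sets. -/
structure IsBPAModel (M : Type) [Larith.Structure M] : Prop where
  add_assoc : ∀ x y z : M, aadd (aadd x y) z = aadd x (aadd y z)
  add_comm : ∀ x y : M, aadd x y = aadd y x
  add_zero : ∀ x : M, aadd x (azero M) = x
  mul_assoc : ∀ x y z : M, amul (amul x y) z = amul x (amul y z)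
  mul_comm : ∀ x y : M, amul x y = amul y x
  mul_one : ∀ x : M, amul x (aone M) = x
  mul_zero : ∀ x : M, amul x (azero M) = azero M
  distrib : ∀ x y z : M, amul x (aadd y z) = aadd (amul x y) (amul x z)
  lt_irrefl : ∀ x : M, ¬ alt x x
  lt_trans : ∀ x y z : M, alt x y → alt y z → alt x z
  lt_total : ∀ x y : M, alt x y ∨ x = y ∨ alt y x
  add_lt_add : ∀ x y z : M, alt x y → alt (aadd x z) (aadd y z)
  mul_lt_mul : ∀ x y z : M, alt (azero M) z → alt x y → alt (amul x z) (amul y z)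
  zero_lt_one : alt (azero M) (aone M)
  zero_le : ∀ x : M, x = azero M ∨ alt (azero M) x
  lt_iff_add : ∀ x y : M, alt x y ↔ ∃ z : M, y = aadd x (aadd z (aone M))
  induction : ∀ S : Set M,
    Delta0DefinableRel M 1 {x : Fin 1 → M | x 0 ∈ S} →
    azero M ∈ S → (∀ x ∈ S, aadd x (aone M) ∈ S) → ∀ x : M, x ∈ S

/-- A `Δ₀`-definable relation `E x y z`, read `x ^ y = z`, with all the usual
properties of the graph of exponentiation except possibly totality
(Gaifman–Dimitracopoulos). -/
structure ExpGraph (M : Type) [Larith.Structure M] (E : M → M → M → Prop) : Prop where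
  definable : ∃ (p : ℕ) (φ : Larith.BoundedFormula (Fin p) 3) (v : Fin p → M),
    IsDelta0 φ ∧ ∀ x y z : M, (E x y z ↔ φ.Realize v ![x, y, z])
  exp_zero : ∀ x : M, E x (azero M) (aone M)
  exp_succ : ∀ x y z : M, E x y z → E x (aadd y (aone M)) (amul z x)
  exp_unique : ∀ x y z z' : M, E x y z → E x y z' → z = z'
  exp_dcl : ∀ x y z : M, E x y z → ∀ y' : M, alt y' y → ∃ z' : M, E x y' z'

/-- Standard (externally finite) powers `d ^ n` in `M`. -/
def stdPow {M : Type} [Larith.Structure M] (d : M) : ℕ → M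
  | 0 => aone M
  | n + 1 => amul (stdPow d n) d

section Infra

open FirstOrder Language BoundedFormula

variable {α β : Type}

/-- Term builders for the arithmetic language. -/
def tzero {γ : Type} : Larith.Term γ := Term.func (L := Larith) (l := 0) ((0 : Fin 2) : arithFunc 0) ![]
def tone {γ : Type} : Larith.Term γ := Term.func (L := Larith) (l := 0) ((1 : Fin 2) : arithFunc 0) ![]
def tadd {γ : Type} (t u : Larith.Term γ) : Larith.Term γ :=
  Term.func (L := Larith) (l := 2) ((0 : Fin 2) : arithFunc 2) ![t, u]
def tmul {γ : Type} (t u : Larith.Term γ) : Larith.Term γ :=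
  Term.func (L := Larith) (l := 2) ((1 : Fin 2) : arithFunc 2) ![t, u]

variable {M : Type} [Larith.Structure M]

@[simp] lemma realize_tzero {γ : Type} (v : γ → M) : tzero.realize v = azero M := by
  simp only [tzero, Term.realize, azero]
  congr 1; funext i; exact i.elim0

@[simp] lemma realize_tone {γ : Type} (v : γ → M) : tone.realize v = aone M := by
  simp only [tone, Term.realize, aone]
  congr 1; funext i; exact i.elim0

@[simp] lemma realize_tadd {γ : Type} (v : γ → M) (t u : Larith.Term γ) :
    (tadd t u).realize v = aadd (t.realize v) (u.realize v) := by
  simp only [tadd, Term.realize, aadd]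
  congr 1; funext i; fin_cases i <;> rfl

@[simp] lemma realize_tmul {γ : Type} (v : γ → M) (t u : Larith.Term γ) :
    (tmul t u).realize v = amul (t.realize v) (u.realize v) := by
  simp only [tmul, Term.realize, amul]
  congr 1; funext i; fin_cases i <;> rfl

/-- The `<` atomic formula. -/
def flt {n : ℕ} (t u : Larith.Term (α ⊕ Fin n)) : Larith.BoundedFormula α n :=
  BoundedFormula.rel (L := Larith) (l := 2) ((() : Unit) : arithRel 2) ![t, u]

@[simp] lemma realize_flt {n : ℕ} {t u : Larith.Term (α ⊕ Fin n)} {v : α → M} {xs : Fin n → M} :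
    (flt t u).Realize v xs ↔ alt (t.realize (Sum.elim v xs)) (u.realize (Sum.elim v xs)) := by
  have : (fun i => Term.realize (Sum.elim v xs) (![t, u] i)) =
      ![t.realize (Sum.elim v xs), u.realize (Sum.elim v xs)] := by
    funext i; fin_cases i <;> rfl
  simp only [flt, BoundedFormula.Realize, alt, this]

lemma isDelta0_flt {n : ℕ} (t u : Larith.Term (α ⊕ Fin n)) : IsDelta0 (flt t u) :=
  IsDelta0.rel _ _

lemma isDelta0_not {n : ℕ} {φ : Larith.BoundedFormula α n} (h : IsDelta0 φ) :
    IsDelta0 φ.not := IsDelta0.imp h IsDelta0.falsum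

lemma isDelta0_sup {n : ℕ} {φ ψ : Larith.BoundedFormula α n} (hφ : IsDelta0 φ)
    (hψ : IsDelta0 ψ) : IsDelta0 (φ ⊔ ψ) := IsDelta0.imp (isDelta0_not hφ) hψ

lemma isDelta0_inf {n : ℕ} {φ ψ : Larith.BoundedFormula α n} (hφ : IsDelta0 φ)
    (hψ : IsDelta0 ψ) : IsDelta0 (φ ⊓ ψ) := isDelta0_not (IsDelta0.imp hφ (isDelta0_not hψ))

/-- Lift a term-substitution under a binder. -/
def liftSub {n m : ℕ} (f : α ⊕ Fin n → Larith.Term (β ⊕ Fin m)) :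
    α ⊕ Fin (n + 1) → Larith.Term (β ⊕ Fin (m + 1))
  | .inl a => (f (.inl a)).relabel (Sum.map id Fin.castSucc)
  | .inr i =>
    if h : i = Fin.last n then Term.var (.inr (Fin.last m))
    else (f (.inr (i.castPred h))).relabel (Sum.map id Fin.castSucc)

/-- Simultaneous substitution of terms for all (free and bound) variables. -/
def bsubst : ∀ {n m : ℕ}, Larith.BoundedFormula α n →
    (α ⊕ Fin n → Larith.Term (β ⊕ Fin m)) → Larith.BoundedFormula β m
  | _, _, .falsum, _ => .falsum
  | _, _, .equal t u, f => (t.subst f).bdEqual (u.subst f)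
  | _, _, .rel R ts, f => .rel R fun i => (ts i).subst f
  | _, _, .imp φ ψ, f => (bsubst φ f).imp (bsubst ψ f)
  | _, _, .all φ, f => (bsubst φ (liftSub f)).all

lemma liftSub_inl {n m : ℕ} (f : α ⊕ Fin n → Larith.Term (β ⊕ Fin m)) (a : α) :
    liftSub f (.inl a) = (f (.inl a)).relabel (Sum.map id Fin.castSucc) := rfl

lemma liftSub_last {n m : ℕ} (f : α ⊕ Fin n → Larith.Term (β ⊕ Fin m)) :
    liftSub f (.inr (Fin.last n)) = Term.var (.inr (Fin.last m)) := by
  simp [liftSub]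

lemma liftSub_castSucc {n m : ℕ} (f : α ⊕ Fin n → Larith.Term (β ⊕ Fin m)) (i : Fin n) :
    liftSub f (.inr i.castSucc) = (f (.inr i)).relabel (Sum.map id Fin.castSucc) := by
  have h : i.castSucc ≠ Fin.last n := (Fin.castSucc_lt_last i).ne
  simp [liftSub, dif_neg h]

end Infra
section Infra2

open FirstOrder Language BoundedFormula

variable {α β : Type} {M : Type} [Larith.Structure M]

lemma realize_relabel_snoc {m : ℕ} (t : Larith.Term (β ⊕ Fin m)) (v : β → M)
    (xs : Fin m → M) (a : M) :
    (t.relabel (Sum.map id Fin.castSucc)).realize (Sum.elim v (Fin.snoc xs a)) =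
      t.realize (Sum.elim v xs) := by
  rw [Term.realize_relabel]
  congr 1
  funext s
  cases s with
  | inl b => rfl
  | inr i => simp [Fin.snoc_castSucc]

lemma realize_bsubst : ∀ {n m : ℕ} (φ : Larith.BoundedFormula α n)
    (f : α ⊕ Fin n → Larith.Term (β ⊕ Fin m)) (v : β → M) (xs : Fin m → M),
    (bsubst φ f).Realize v xs ↔
      φ.Realize (fun a => (f (.inl a)).realize (Sum.elim v xs))
        (fun i => (f (.inr i)).realize (Sum.elim v xs))
  | n, m, .falsum, f, v, xs => Iff.rfl
  | n, m, .equal t u, f, v, xs => by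
    have h : Sum.elim (fun a => (f (.inl a)).realize (Sum.elim v xs))
        (fun i => (f (.inr i)).realize (Sum.elim v xs)) =
        fun s => (f s).realize (Sum.elim v xs) := by
      funext s; cases s <;> rfl
    simp only [bsubst, BoundedFormula.Realize, BoundedFormula.realize_bdEqual, Term.realize_subst, h]
  | n, m, .rel R ts, f, v, xs => by
    have h : Sum.elim (fun a => (f (.inl a)).realize (Sum.elim v xs))
        (fun i => (f (.inr i)).realize (Sum.elim v xs)) =
        fun s => (f s).realize (Sum.elim v xs) := by
      funext s; cases s <;> rfl
    simp only [bsubst, BoundedFormula.Realize, Term.realize_subst, h]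
  | n, m, .imp φ ψ, f, v, xs => by
    simp only [bsubst, BoundedFormula.Realize]
    rw [realize_bsubst φ f v xs, realize_bsubst ψ f v xs]
  | n, m, .all φ, f, v, xs => by
    simp only [bsubst, BoundedFormula.Realize]
    apply forall_congr'
    intro a
    have e1 : (fun b : α => (liftSub f (.inl b)).realize (Sum.elim v (Fin.snoc xs a))) =
        (fun b => ((f (.inl b)).realize (Sum.elim v xs) : M)) := by
      funext b; rw [liftSub_inl, realize_relabel_snoc]
    have e2 : (fun i : Fin (n + 1) => (liftSub f (.inr i)).realize (Sum.elim v (Fin.snoc xs a))) =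
        Fin.snoc (fun i => ((f (.inr i)).realize (Sum.elim v xs) : M)) a := by
      funext i
      refine Fin.lastCases ?_ (fun j => ?_) i
      · rw [liftSub_last]; simp
      · rw [liftSub_castSucc, realize_relabel_snoc]; simp
    rw [realize_bsubst φ (liftSub f) v (Fin.snoc xs a), e1, e2]

lemma subst_relabel_liftSub {n m : ℕ} (f : α ⊕ Fin n → Larith.Term (β ⊕ Fin m))
    (t : Larith.Term (α ⊕ Fin n)) :
    (t.relabel (Sum.map id Fin.castSucc)).subst (liftSub f) =
      (t.subst f).relabel (Sum.map id Fin.castSucc) := by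
  induction t with
  | var s =>
    cases s with
    | inl a => rfl
    | inr i => exact liftSub_castSucc f i
  | func g ts ih =>
    simp only [Term.relabel, Term.subst]
    congr 1
    funext i
    exact ih i

lemma isDelta0_bsubst {n : ℕ} {φ : Larith.BoundedFormula α n} (h : IsDelta0 φ) :
    ∀ {m : ℕ} (f : α ⊕ Fin n → Larith.Term (β ⊕ Fin m)), IsDelta0 (bsubst φ f) := by
  induction h with
  | falsum => intro m f; exact .falsum
  | equal t u => intro m f; exact .equal _ _
  | rel R ts => intro m f; exact .rel _ _
  | imp h1 h2 ih1 ih2 => intro m f; exact .imp (ih1 f) (ih2 f)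
  | @ball k t φ hφ ih =>
    intro m f
    show IsDelta0 ((bsubst _ (liftSub f)).imp (bsubst φ (liftSub f))).all
    have hg : bsubst ((show Larith.Relations 2 from ()).boundedFormula₂
        (Term.var (Sum.inr (Fin.last k))) (t.relabel (Sum.map id Fin.castSucc)))
        (liftSub f) =
        (show Larith.Relations 2 from ()).boundedFormula₂
          (Term.var (Sum.inr (Fin.last m))) ((t.subst f).relabel (Sum.map id Fin.castSucc)) := by
      show BoundedFormula.rel _ _ = BoundedFormula.rel _ _
      congr 1
      funext i
      fin_cases i
      · exact liftSub_last f
      · exact subst_relabel_liftSub f t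
    rw [hg]
    exact IsDelta0.ball (t.subst f) (ih (liftSub f))

end Infra2
section Infra3

open FirstOrder Language BoundedFormula

set_option linter.unusedSectionVars false

variable {α : Type} {M : Type} [Larith.Structure M]

/-- Term equality as a bounded formula. -/
def teq {n : ℕ} (t u : Larith.Term (α ⊕ Fin n)) : Larith.BoundedFormula α n := t.bdEqual u

@[simp] lemma realize_teq {n : ℕ} {t u : Larith.Term (α ⊕ Fin n)} {v : α → M}
    {xs : Fin n → M} :
    (teq t u).Realize v xs ↔ t.realize (Sum.elim v xs) = u.realize (Sum.elim v xs) :=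
  BoundedFormula.realize_bdEqual t u

lemma isDelta0_teq {n : ℕ} (t u : Larith.Term (α ⊕ Fin n)) : IsDelta0 (teq t u) :=
  IsDelta0.equal t u

/-- Bounded universal quantifier `∀ z < t, φ`. -/
def dBall {n : ℕ} (t : Larith.Term (α ⊕ Fin n)) (φ : Larith.BoundedFormula α (n + 1)) :
    Larith.BoundedFormula α n :=
  ((((show Larith.Relations 2 from ()).boundedFormula₂
        (Term.var (Sum.inr (Fin.last n)))
        (t.relabel (Sum.map id Fin.castSucc))).imp φ).all)

lemma isDelta0_dBall {n : ℕ} (t : Larith.Term (α ⊕ Fin n))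
    {φ : Larith.BoundedFormula α (n + 1)} (h : IsDelta0 φ) : IsDelta0 (dBall t φ) :=
  IsDelta0.ball t h

/-- Bounded existential quantifier `∃ z < t, φ`. -/
def dBex {n : ℕ} (t : Larith.Term (α ⊕ Fin n)) (φ : Larith.BoundedFormula α (n + 1)) :
    Larith.BoundedFormula α n :=
  (dBall t φ.not).not

lemma isDelta0_dBex {n : ℕ} (t : Larith.Term (α ⊕ Fin n))
    {φ : Larith.BoundedFormula α (n + 1)} (h : IsDelta0 φ) : IsDelta0 (dBex t φ) :=
  isDelta0_not (isDelta0_dBall t (isDelta0_not h))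

lemma realize_dBall {n : ℕ} {t : Larith.Term (α ⊕ Fin n)}
    {φ : Larith.BoundedFormula α (n + 1)} {v : α → M} {xs : Fin n → M} :
    (dBall t φ).Realize v xs ↔
      ∀ a : M, alt a (t.realize (Sum.elim v xs)) → φ.Realize v (Fin.snoc xs a) := by
  rw [dBall, BoundedFormula.realize_all]
  apply forall_congr'
  intro a
  rw [BoundedFormula.realize_imp, BoundedFormula.realize_rel₂]
  have h1 : Term.realize (Sum.elim v (Fin.snoc xs a))
      (Term.var (Sum.inr (Fin.last n)) : Larith.Term (α ⊕ Fin (n + 1))) = a := by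
    simp only [Term.realize, Sum.elim_inr]
    exact Fin.snoc_last _ _
  rw [h1, realize_relabel_snoc]
  rfl

lemma realize_dBex {n : ℕ} {t : Larith.Term (α ⊕ Fin n)}
    {φ : Larith.BoundedFormula α (n + 1)} {v : α → M} {xs : Fin n → M} :
    (dBex t φ).Realize v xs ↔
      ∃ a : M, alt a (t.realize (Sum.elim v xs)) ∧ φ.Realize v (Fin.snoc xs a) := by
  rw [dBex, BoundedFormula.realize_not, realize_dBall]
  push_neg
  apply exists_congr
  intro a
  rw [BoundedFormula.realize_not, Classical.not_not]

@[simp] lemma snoc_one (b a : M) : Fin.snoc ![b] a = ![b, a] := by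
  funext i
  fin_cases i <;> rfl

@[simp] lemma snoc_two (b c a : M) : Fin.snoc ![b, c] a = ![b, c, a] := by
  funext i
  fin_cases i <;> rfl

@[simp] lemma snoc_three (b c d a : M) : Fin.snoc ![b, c, d] a = ![b, c, d, a] := by
  funext i
  fin_cases i <;> rfl

end Infra3
section Infra4

open FirstOrder Language BoundedFormula

set_option linter.unusedSectionVars false

variable {p : ℕ} (φE : Larith.BoundedFormula (Fin p) 3)

/-- Substitution instance of the exponentiation graph formula. -/
def eAtom {q k : ℕ} (g : Fin p → Fin q) (t₁ t₂ t₃ : Larith.Term (Fin q ⊕ Fin k)) :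
    Larith.BoundedFormula (Fin q) k :=
  bsubst φE (Sum.elim (fun i => Term.var (Sum.inl (g i))) ![t₁, t₂, t₃])

lemma isDelta0_eAtom (hφ : IsDelta0 φE) {q k : ℕ} (g : Fin p → Fin q)
    (t₁ t₂ t₃ : Larith.Term (Fin q ⊕ Fin k)) : IsDelta0 (eAtom φE g t₁ t₂ t₃) :=
  isDelta0_bsubst hφ _

variable {M : Type} [Larith.Structure M]

lemma realize_eAtom (E : M → M → M → Prop) (v₀ : Fin p → M)
    (hiff : ∀ x y z : M, E x y z ↔ φE.Realize v₀ ![x, y, z])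
    {q k : ℕ} (g : Fin p → Fin q) (t₁ t₂ t₃ : Larith.Term (Fin q ⊕ Fin k))
    (vv : Fin q → M) (hg : ∀ i, vv (g i) = v₀ i) (xs : Fin k → M) :
    (eAtom φE g t₁ t₂ t₃).Realize vv xs ↔
      E (t₁.realize (Sum.elim vv xs)) (t₂.realize (Sum.elim vv xs))
        (t₃.realize (Sum.elim vv xs)) := by
  rw [eAtom, realize_bsubst]
  have e1 : (fun a => (Sum.elim (fun i => (Term.var (Sum.inl (g i)) :
      Larith.Term (Fin q ⊕ Fin k))) ![t₁, t₂, t₃] (Sum.inl a)).realize (Sum.elim vv xs)) = v₀ := by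
    funext i; exact hg i
  have e2 : (fun j : Fin 3 => (Sum.elim (fun i => (Term.var (Sum.inl (g i)) :
      Larith.Term (Fin q ⊕ Fin k))) ![t₁, t₂, t₃] (Sum.inr j)).realize (Sum.elim vv xs)) =
      ![t₁.realize (Sum.elim vv xs), t₂.realize (Sum.elim vv xs),
        t₃.realize (Sum.elim vv xs)] := by
    funext j; fin_cases j <;> rfl
  rw [e1, e2, ← hiff]

end Infra4

section Infra5

open FirstOrder Language BoundedFormula

variable {M : Type} [Larith.Structure M]

/-- Induction for `Δ₀`-definable predicates. -/
lemma delta0_induction (hB : IsBPAModel M) (P : M → Prop) {q : ℕ}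
    (χ : Larith.BoundedFormula (Fin q) 1) (vv : Fin q → M) (hχ : IsDelta0 χ)
    (hiff : ∀ b : M, P b ↔ χ.Realize vv ![b])
    (h0 : P (azero M)) (hsucc : ∀ b, P b → P (aadd b (aone M))) : ∀ b, P b := by
  have key := hB.induction {b | P b} ⟨q, χ, vv, hχ, ?_⟩ h0 hsucc
  · exact key
  · ext xs
    have hxs : ![xs 0] = xs := by
      funext i; fin_cases i; rfl
    simp only [Set.mem_setOf_eq]
    rw [hiff (xs 0), hxs]

end Infra5

section Arith

variable {M : Type} [Larith.Structure M]

/-- Non-strict order. -/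
def ale (x y : M) : Prop := alt x y ∨ x = y

variable (hB : IsBPAModel M)
include hB

lemma zadd (x : M) : aadd (azero M) x = x := by rw [hB.add_comm, hB.add_zero]

lemma one_mul' (x : M) : amul (aone M) x = x := by rw [hB.mul_comm, hB.mul_one]

lemma zero_mul' (x : M) : amul (azero M) x = azero M := by rw [hB.mul_comm, hB.mul_zero]

lemma not_lt_of_lt {x y : M} (h : alt x y) : ¬ alt y x :=
  fun h' => hB.lt_irrefl x (hB.lt_trans x y x h h')

lemma lt_succ_self (x : M) : alt x (aadd x (aone M)) := by
  rw [hB.lt_iff_add]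
  exact ⟨azero M, by rw [zadd hB]⟩

lemma pos_iff_succ {z : M} (h : alt (azero M) z) : ∃ w : M, z = aadd w (aone M) := by
  rw [hB.lt_iff_add] at h
  obtain ⟨w, hw⟩ := h
  exact ⟨w, by rw [hw, zadd hB]⟩

lemma one_le_of_pos {z : M} (h : alt (azero M) z) : ale (aone M) z := by
  obtain ⟨w, hw⟩ := pos_iff_succ hB h
  rcases hB.zero_le w with h0 | hpos
  · right; rw [hw, h0, zadd hB]
  · left
    rw [hw]
    have := hB.add_lt_add (azero M) w (aone M) hpos
    rwa [zadd hB] at this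

lemma succ_pos (y : M) : alt (azero M) (aadd y (aone M)) := by
  rw [hB.lt_iff_add]
  exact ⟨y, (zadd hB _).symm⟩

lemma one_pos : alt (azero M) (aone M) := hB.zero_lt_one

lemma mul_pos' {a b : M} (ha : alt (azero M) a) (hb : alt (azero M) b) :
    alt (azero M) (amul a b) := by
  have := hB.mul_lt_mul (azero M) a b hb ha
  rwa [zero_mul' hB] at this

lemma le_add_left (x y : M) : ale x (aadd y x) := by
  rcases hB.zero_le y with h0 | hpos
  · right; rw [h0, zadd hB]
  · left
    obtain ⟨w, hw⟩ := pos_iff_succ hB hpos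
    rw [hB.lt_iff_add]
    exact ⟨w, by rw [hB.add_comm, hw]⟩

lemma le_add_right (x y : M) : ale x (aadd x y) := by
  rw [hB.add_comm]
  exact le_add_left hB x y

lemma lt_of_lt_of_le {x y z : M} (h1 : alt x y) (h2 : ale y z) : alt x z := by
  rcases h2 with h2 | h2
  · exact hB.lt_trans x y z h1 h2
  · rwa [h2] at h1

lemma lt_of_le_of_lt {x y z : M} (h1 : ale x y) (h2 : alt y z) : alt x z := by
  rcases h1 with h1 | h1
  · exact hB.lt_trans x y z h1 h2
  · rwa [← h1] at h2

lemma le_trans' {x y z : M} (h1 : ale x y) (h2 : ale y z) : ale x z := by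
  rcases h2 with h2 | h2
  · exact Or.inl (lt_of_le_of_lt hB h1 h2)
  · rwa [← h2]

lemma succ_le_of_lt {b d : M} (h : alt b d) : ale (aadd b (aone M)) d := by
  rw [hB.lt_iff_add] at h
  obtain ⟨z, hz⟩ := h
  have : d = aadd (aadd b (aone M)) z := by
    rw [hz, hB.add_assoc, hB.add_comm (aone M) z]
  rw [this]
  exact le_add_right hB _ _

lemma not_lt_of_le {x y : M} (h : ale x y) : ¬ alt y x := by
  rcases h with h | h
  · exact not_lt_of_lt hB h
  · rw [h]; exact hB.lt_irrefl y

lemma lt_succ_iff_le {u U : M} : alt u (aadd U (aone M)) ↔ ale u U := by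
  constructor
  · intro h
    rcases hB.lt_total u U with h' | h' | h'
    · exact Or.inl h'
    · exact Or.inr h'
    · exfalso
      have := succ_le_of_lt hB h'
      exact not_lt_of_le hB this h
  · intro h
    exact lt_of_le_of_lt hB h (lt_succ_self hB U)

lemma add_cancel_zero {d f : M} (h : aadd d f = d) : f = azero M := by
  rcases hB.zero_le f with h0 | hpos
  · exact h0
  · exfalso
    obtain ⟨w, hw⟩ := pos_iff_succ hB hpos
    have : alt d (aadd d f) := by
      rw [hB.lt_iff_add]
      exact ⟨w, by rw [hw]⟩
    rw [h] at this
    exact hB.lt_irrefl d this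

lemma le_mul_right {u v : M} (hv : alt (azero M) v) : ale u (amul u v) := by
  rcases hB.zero_le u with h0 | hu
  · right
    rw [h0, zero_mul' hB]
  · rcases one_le_of_pos hB hv with h1 | h1
    · left
      have := hB.mul_lt_mul (aone M) v u hu h1
      rwa [one_mul' hB, hB.mul_comm] at this
    · right
      rw [← h1, hB.mul_one]

lemma one_ne_zero' : aone M ≠ azero M := by
  intro h
  have := hB.zero_lt_one
  rw [h] at this
  exact hB.lt_irrefl _ this

end Arith

section Exp

open FirstOrder Language BoundedFormula

variable {M : Type} [Larith.Structure M]

def pv {q k : ℕ} (i : Fin q) : Larith.Term (Fin q ⊕ Fin k) := Term.var (Sum.inl i)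
def sv {q k : ℕ} (j : Fin k) : Larith.Term (Fin q ⊕ Fin k) := Term.var (Sum.inr j)

@[simp] lemma realize_pv {q k : ℕ} (i : Fin q) (v : Fin q → M) (xs : Fin k → M) :
    (pv i).realize (Sum.elim v xs) = v i := rfl
@[simp] lemma realize_sv {q k : ℕ} (j : Fin k) (v : Fin q → M) (xs : Fin k → M) :
    (sv (q := q) j).realize (Sum.elim v xs) = xs j := rfl

variable (hB : IsBPAModel M) {E : M → M → M → Prop} (hE : ExpGraph M E)
include hB hE

lemma exp_pos {x : M} (hx : alt (azero M) x) : ∀ y z : M, E x y z → alt (azero M) z := by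
  obtain ⟨p, φ, v, hφ, hiff⟩ := hE.definable
  have main : ∀ y : M, ¬ E x y (azero M) := by
    refine delta0_induction hB (fun y => ¬ E x y (azero M))
      ((eAtom φ (Fin.castAdd 1) (pv (Fin.natAdd p 0)) (sv 0) tzero).not)
      (Fin.addCases v ![x]) (isDelta0_not (isDelta0_eAtom φ hφ _ _ _ _)) ?_ ?_ ?_
    · intro b
      rw [BoundedFormula.realize_not,
        realize_eAtom φ E v hiff (Fin.castAdd 1) _ _ _ _ (fun i => Fin.addCases_left i) (![b])]
      simp [Fin.addCases_right]
    · intro h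
      have := hE.exp_unique x (azero M) (aone M) (azero M) (hE.exp_zero x) h
      exact one_ne_zero' hB this
    · intro y hy hcontra
      obtain ⟨z', hz'⟩ := hE.exp_dcl x (aadd y (aone M)) (azero M) hcontra y (lt_succ_self hB y)
      have hsucc := hE.exp_succ x y z' hz'
      have heq := hE.exp_unique x (aadd y (aone M)) (azero M) (amul z' x) hcontra hsucc
      rcases hB.zero_le z' with h0 | hpos
      · rw [h0] at hz'; exact hy hz'
      · have := mul_pos' hB hpos hx
        rw [← heq] at this
        exact hB.lt_irrefl _ this
  intro y z hyz
  rcases hB.zero_le z with h0 | hpos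
  · rw [h0] at hyz; exact absurd hyz (main y)
  · exact hpos

lemma exp_zero_base : ∀ y : M, y = azero M ∨ E (azero M) y (azero M) := by
  obtain ⟨p, φ, v, hφ, hiff⟩ := hE.definable
  refine delta0_induction hB (fun y => y = azero M ∨ E (azero M) y (azero M))
    ((teq (sv 0) tzero) ⊔ (eAtom φ id tzero (sv 0) tzero)) v
    (isDelta0_sup (isDelta0_teq _ _) (isDelta0_eAtom φ hφ _ _ _ _)) ?_ ?_ ?_
  · intro b
    rw [BoundedFormula.realize_sup, realize_teq,
      realize_eAtom φ E v hiff id _ _ _ _ (fun i => rfl) (![b])]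
    simp
  · exact Or.inl rfl
  · intro b hb
    right
    rcases hb with h0 | hb
    · rw [h0]
      have := hE.exp_succ (azero M) (azero M) (aone M) (hE.exp_zero (azero M))
      rwa [hB.mul_zero] at this
    · have := hE.exp_succ (azero M) b (azero M) hb
      rwa [hB.mul_zero] at this

lemma exp_mono_ex {W d U : M} (hW : alt (azero M) W) (hdU : E W d U) :
    ∀ e : M, ¬ alt d e → ∃ u : M, ale u U ∧ E W e u := by
  obtain ⟨p, φ, v, hφ, hiff⟩ := hE.definable
  have hU : alt (azero M) U := exp_pos hB hE hW d U hdU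
  set g : Fin p → Fin (p + 3) := Fin.castAdd 3 with hg
  set vv : Fin (p + 3) → M := Fin.addCases v ![W, d, U] with hvv
  have hgv : ∀ i, vv (g i) = v i := fun i => Fin.addCases_left i
  have hvW : vv (Fin.natAdd p 0) = W := by simp [hvv]
  have hvd : vv (Fin.natAdd p 1) = d := by simp [hvv]
  have hvU : vv (Fin.natAdd p 2) = U := by simp [hvv]
  have key : ∀ e : M, alt d e ∨ ∃ f : M, alt f (aadd d (aone M)) ∧
      ∃ u : M, alt u (aadd U (aone M)) ∧ ∃ w : M, alt w (aadd U (aone M)) ∧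
      (aadd e f = d ∧ (E W e u ∧ (E W f w ∧ amul u w = U))) := by
    refine delta0_induction hB _
      ((flt (pv (Fin.natAdd p 1)) (sv 0)) ⊔
        dBex (tadd (pv (Fin.natAdd p 1)) tone)
          (dBex (tadd (pv (Fin.natAdd p 2)) tone)
            (dBex (tadd (pv (Fin.natAdd p 2)) tone)
              ((teq (tadd (sv 0) (sv 1)) (pv (Fin.natAdd p 1))) ⊓
                ((eAtom φ g (pv (Fin.natAdd p 0)) (sv 0) (sv 2)) ⊓
                  ((eAtom φ g (pv (Fin.natAdd p 0)) (sv 1) (sv 3)) ⊓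
                    (teq (tmul (sv 2) (sv 3)) (pv (Fin.natAdd p 2)))))))))
      vv
      (isDelta0_sup (isDelta0_flt _ _)
        (isDelta0_dBex _ (isDelta0_dBex _ (isDelta0_dBex _
          (isDelta0_inf (isDelta0_teq _ _) (isDelta0_inf (isDelta0_eAtom φ hφ _ _ _ _)
            (isDelta0_inf (isDelta0_eAtom φ hφ _ _ _ _) (isDelta0_teq _ _))))))))
      ?_ ?_ ?_
    · intro b
      simp only [BoundedFormula.realize_sup, realize_flt, realize_dBex,
        BoundedFormula.realize_inf, realize_teq, snoc_one, snoc_two, snoc_three,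
        realize_tadd, realize_tone, realize_tmul, realize_pv, realize_sv,
        realize_eAtom φ E v hiff g _ _ _ vv hgv, hvW, hvd, hvU,
        Matrix.cons_val_zero, Matrix.cons_val_one, Matrix.head_cons,
        Matrix.cons_val_two, Matrix.tail_cons, Matrix.cons_val_three]
    · -- base : e = 0
      right
      refine ⟨d, lt_succ_self hB d, aone M, ?_, U, lt_succ_iff_le hB |>.2 (Or.inr rfl), ?_, ?_, ?_, ?_⟩
      · exact (lt_succ_iff_le hB).2 (one_le_of_pos hB hU)
      · exact zadd hB d
      · exact hE.exp_zero W
      · exact hdU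
      · exact one_mul' hB U
    · -- successor step
      rintro e (hde | ⟨f, hf, u, hu, w, hw, hefd, hWeu, hWfw, huwU⟩)
      · exact Or.inl (hB.lt_trans d e (aadd e (aone M)) hde (lt_succ_self hB e))
      · rcases hB.zero_le f with hf0 | hfpos
        · left
          rw [hf0, hB.add_zero] at hefd
          rw [← hefd]
          exact lt_succ_self hB e
        · right
          obtain ⟨f', hf'⟩ := pos_iff_succ hB hfpos
          obtain ⟨w', hw'⟩ := hE.exp_dcl W f w hWfw f' (by rw [hf']; exact lt_succ_self hB f')
          have hsucc := hE.exp_succ W f' w' hw'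
          rw [← hf'] at hsucc
          have hww : w = amul w' W := hE.exp_unique W f w (amul w' W) hWfw hsucc
          have hmain : amul (amul u W) w' = U := by
            show amul (amul u W) w' = U
            rw [hB.mul_assoc, hB.mul_comm W w', ← hww]
            exact huwU
          have hw'pos : alt (azero M) w' := exp_pos hB hE hW f' w' hw'
          refine ⟨f', ?_, amul u W, ?_, w', ?_, ?_, ?_, ?_, ?_⟩
          · exact hB.lt_trans f' f (aadd d (aone M))
              (by rw [hf']; exact lt_succ_self hB f') hf
          · rw [lt_succ_iff_le hB, ← hmain]
            exact le_mul_right hB hw'pos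
          · have hw'w : ale w' w := by rw [hww]; exact le_mul_right hB hW
            rw [lt_succ_iff_le hB]
            exact le_trans' hB hw'w ((lt_succ_iff_le hB).1 hw)
          · rw [← hefd, hf', hB.add_assoc, hB.add_comm (aone M) f']
          · exact hE.exp_succ W e u hWeu
          · exact hw'
          · exact hmain
  intro e hde
  rcases key e with h | ⟨f, _, u, hu, w, _, _, hWeu, _, _⟩
  · exact absurd h hde
  · exact ⟨u, (lt_succ_iff_le hB).1 hu, hWeu⟩

lemma exp_add {x : M} (hx : alt (azero M) x) {c u a W : M} (hcu : E x c u)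
    (haW : E x a W) : E x (aadd c a) (amul u W) := by
  obtain ⟨p, φ, v, hφ, hiff⟩ := hE.definable
  have hWpos : alt (azero M) W := exp_pos hB hE hx a W haW
  set g : Fin p → Fin (p + 5) := Fin.castAdd 5 with hgdef
  set vv : Fin (p + 5) → M := Fin.addCases v ![x, a, W, c, u] with hvv
  have hgv : ∀ i, vv (g i) = v i := fun i => Fin.addCases_left i
  have hvx : vv (Fin.natAdd p 0) = x := by simp [hvv]
  have hva : vv (Fin.natAdd p 1) = a := by simp [hvv]
  have hvW : vv (Fin.natAdd p 2) = W := by simp [hvv]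
  have hvc : vv (Fin.natAdd p 3) = c := by simp [hvv]
  have hvu : vv (Fin.natAdd p 4) = u := by simp [hvv]
  have key : ∀ b : M, alt a b ∨ ∃ w : M, alt w (aadd W (aone M)) ∧
      (E x b w ∧ E x (aadd c b) (amul u w)) := by
    refine delta0_induction hB _
      ((flt (pv (Fin.natAdd p 1)) (sv 0)) ⊔
        dBex (tadd (pv (Fin.natAdd p 2)) tone)
          ((eAtom φ g (pv (Fin.natAdd p 0)) (sv 0) (sv 1)) ⊓
            (eAtom φ g (pv (Fin.natAdd p 0)) (tadd (pv (Fin.natAdd p 3)) (sv 0))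
              (tmul (pv (Fin.natAdd p 4)) (sv 1)))))
      vv
      (isDelta0_sup (isDelta0_flt _ _) (isDelta0_dBex _
        (isDelta0_inf (isDelta0_eAtom φ hφ _ _ _ _) (isDelta0_eAtom φ hφ _ _ _ _))))
      ?_ ?_ ?_
    · intro b
      simp only [BoundedFormula.realize_sup, realize_flt, realize_dBex,
        BoundedFormula.realize_inf, snoc_one,
        realize_tadd, realize_tone, realize_tmul, realize_pv, realize_sv,
        realize_eAtom φ E v hiff g _ _ _ vv hgv, hvx, hva, hvW, hvc, hvu,
        Matrix.cons_val_zero, Matrix.cons_val_one, Matrix.head_cons]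
    · right
      refine ⟨aone M, (lt_succ_iff_le hB).2 (one_le_of_pos hB hWpos), hE.exp_zero x, ?_⟩
      rw [hB.add_zero, hB.mul_one]
      exact hcu
    · rintro b (hab | ⟨w, hw, hxbw, hxcbw⟩)
      · exact Or.inl (hB.lt_trans a b (aadd b (aone M)) hab (lt_succ_self hB b))
      · rcases hB.lt_total b a with hba | hba | hba
        · right
          have hle : ale (aadd b (aone M)) a := succ_le_of_lt hB hba
          obtain ⟨w'', hw''le, hw''⟩ := exp_mono_ex hB hE hx haW (aadd b (aone M))
            (not_lt_of_le hB hle)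
          have hsucc := hE.exp_succ x b w hxbw
          have heq : w'' = amul w x := hE.exp_unique x (aadd b (aone M)) w'' (amul w x) hw'' hsucc
          refine ⟨amul w x, ?_, hsucc, ?_⟩
          · rw [lt_succ_iff_le hB, ← heq]
            exact hw''le
          · have := hE.exp_succ x (aadd c b) (amul u w) hxcbw
            rwa [hB.add_assoc, hB.mul_assoc] at this
        · left
          rw [hba]
          exact lt_succ_self hB a
        · exact Or.inl (hB.lt_trans a b (aadd b (aone M)) hba (lt_succ_self hB b))
  rcases key a with h | ⟨w, _, hxaw, hxcaw⟩
  · exact absurd h (hB.lt_irrefl a)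
  · have : w = W := hE.exp_unique x a w W hxaw haW
    rwa [this] at hxcaw

lemma exp_mul {x : M} (hx : alt (azero M) x) {a W d U : M} (haW : E x a W)
    (hdU : E W d U) : E x (amul a d) U := by
  obtain ⟨p, φ, v, hφ, hiff⟩ := hE.definable
  have hWpos : alt (azero M) W := exp_pos hB hE hx a W haW
  have hUpos : alt (azero M) U := exp_pos hB hE hWpos d U hdU
  set g : Fin p → Fin (p + 5) := Fin.castAdd 5 with hgdef
  set vv : Fin (p + 5) → M := Fin.addCases v ![x, a, W, d, U] with hvv
  have hgv : ∀ i, vv (g i) = v i := fun i => Fin.addCases_left i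
  have hvx : vv (Fin.natAdd p 0) = x := by simp [hvv]
  have hva : vv (Fin.natAdd p 1) = a := by simp [hvv]
  have hvW : vv (Fin.natAdd p 2) = W := by simp [hvv]
  have hvd : vv (Fin.natAdd p 3) = d := by simp [hvv]
  have hvU : vv (Fin.natAdd p 4) = U := by simp [hvv]
  have key : ∀ b : M, alt d b ∨ ∃ u : M, alt u (aadd U (aone M)) ∧
      (E W b u ∧ E x (amul a b) u) := by
    refine delta0_induction hB _
      ((flt (pv (Fin.natAdd p 3)) (sv 0)) ⊔
        dBex (tadd (pv (Fin.natAdd p 4)) tone)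
          ((eAtom φ g (pv (Fin.natAdd p 2)) (sv 0) (sv 1)) ⊓
            (eAtom φ g (pv (Fin.natAdd p 0)) (tmul (pv (Fin.natAdd p 1)) (sv 0)) (sv 1))))
      vv
      (isDelta0_sup (isDelta0_flt _ _) (isDelta0_dBex _
        (isDelta0_inf (isDelta0_eAtom φ hφ _ _ _ _) (isDelta0_eAtom φ hφ _ _ _ _))))
      ?_ ?_ ?_
    · intro b
      simp only [BoundedFormula.realize_sup, realize_flt, realize_dBex,
        BoundedFormula.realize_inf, snoc_one,
        realize_tadd, realize_tone, realize_tmul, realize_pv, realize_sv,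
        realize_eAtom φ E v hiff g _ _ _ vv hgv, hvx, hva, hvW, hvd, hvU,
        Matrix.cons_val_zero, Matrix.cons_val_one, Matrix.head_cons]
    · right
      refine ⟨aone M, (lt_succ_iff_le hB).2 (one_le_of_pos hB hUpos), hE.exp_zero W, ?_⟩
      rw [hB.mul_zero]
      exact hE.exp_zero x
    · rintro b (hdb | ⟨u, hu, hWbu, hxabu⟩)
      · exact Or.inl (hB.lt_trans d b (aadd b (aone M)) hdb (lt_succ_self hB b))
      · rcases hB.lt_total b d with hbd | hbd | hbd
        · right
          have hle : ale (aadd b (aone M)) d := succ_le_of_lt hB hbd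
          obtain ⟨u'', hu''le, hu''⟩ := exp_mono_ex hB hE hWpos hdU (aadd b (aone M))
            (not_lt_of_le hB hle)
          have hsucc := hE.exp_succ W b u hWbu
          have heq : u'' = amul u W :=
            hE.exp_unique W (aadd b (aone M)) u'' (amul u W) hu'' hsucc
          refine ⟨amul u W, ?_, hsucc, ?_⟩
          · rw [lt_succ_iff_le hB, ← heq]
            exact hu''le
          · have := exp_add hB hE hx hxabu haW
            rw [hB.distrib, hB.mul_one]
            exact this
        · left
          rw [hbd]
          exact lt_succ_self hB d
        · exact Or.inl (hB.lt_trans d b (aadd b (aone M)) hbd (lt_succ_self hB b))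
  rcases key d with h | ⟨u, _, hWdu, hxadu⟩
  · exact absurd h (hB.lt_irrefl d)
  · have : u = U := hE.exp_unique W d u U hWdu hdU
    rwa [this] at hxadu

end Exp

/-- Let `N ⊨ I∆₀` and let `D₁` be a reasonable initial segment of `N`
(for all `x ∈ N`, `d ∈ D₁`, `x ^ d` exists). Then the closure
`D₂ = {a : ∃ d ∈ D₁, ∃ standard n, a < dⁿ}` is also reasonable. -/
theorem statement10 (M : Type) [Larith.Structure M] (hB : IsBPAModel M)
    (E : M → M → M → Prop) (hE : ExpGraph M E)
    (D₁ : Set M) (hinit : ∀ x ∈ D₁, ∀ y : M, alt y x → y ∈ D₁)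
    (hreas : ∀ x : M, ∀ d ∈ D₁, ∃ z : M, E x d z) :
    ∀ x : M, ∀ d₂ ∈ {a : M | ∃ d ∈ D₁, ∃ n : ℕ, alt a (stdPow d n)},
      ∃ z : M, E x d₂ z := by
  intro x d₂ hd₂
  obtain ⟨d, hdD, n, hlt⟩ := hd₂
  rcases hB.zero_le x with hx0 | hxpos
  · rcases exp_zero_base hB hE d₂ with h0 | h
    · rw [hx0, h0]
      exact ⟨aone M, hE.exp_zero _⟩
    · rw [hx0]
      exact ⟨azero M, h⟩
  · have hpow : ∀ m : ℕ, ∃ Z : M, E x (stdPow d m) Z := by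
      intro m
      induction m with
      | zero =>
        refine ⟨x, ?_⟩
        have h1 := hE.exp_succ x (azero M) (aone M) (hE.exp_zero x)
        rw [zadd hB, one_mul' hB] at h1
        exact h1
      | succ m ih =>
        obtain ⟨W, hW⟩ := ih
        obtain ⟨U, hU⟩ := hreas W d hdD
        exact ⟨U, exp_mul hB hE hxpos hW hU⟩
    obtain ⟨Z, hZ⟩ := hpow n
    exact hE.exp_dcl x (stdPow d n) Z hZ d₂ hlt


end Paper
end
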